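/- arXiv:1708.02317 — 6 statements merged into one kernel-verified Lean document; each statement's English description precedes it below -/
import Mathlib

section
/- Let α ∈ (0,1) and t ∈ ℕ be such that t > ((1−α)/(2α))² + 1. Then there exists a constant K (depending only on α and t) such that for every n ∈ ℕ and every spherical {−α, α}-code C_α in ℝ^n, there exists a spherical L(α,t)-code C in ℝ^n with |C_α| ≤ |C| + K. -/
set_option maxHeartbeats 1600000


open scoped Classical

/-- The adjacency matrix (over `ℝ`) of a simple graph. -/
noncomputable def adjMat {V : Type*} [Fintype V] (G : SimpleGraph V) : Matrix V V ℝ :=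
  fun i j => if G.Adj i j then 1 else 0

/-- The spectral radius of a finite simple graph: the largest eigenvalue of its
adjacency matrix. -/
noncomputable def specRad {V : Type*} [Fintype V] (G : SimpleGraph V) : ℝ :=
  sSup {μ : ℝ | ∃ v : V → ℝ, v ≠ 0 ∧ (adjMat G).mulVec v = μ • v}

/-- `Contains G H` : the graph `H` contains a copy of `G` as a subgraph. -/
def Contains {V W : Type*} (G : SimpleGraph V) (H : SimpleGraph W) : Prop :=
  ∃ f : V → W, Function.Injective f ∧ ∀ ⦃a b⦄, G.Adj a b → H.Adj (f a) (f b)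

/-- `beta m` : the unique positive real root of `x^(m+1) = 1 + x + ⋯ + x^(m-1)`. -/
noncomputable def beta (m : ℕ) : ℝ :=
  sSup {x : ℝ | 0 < x ∧ x ^ (m + 1) = ∑ i ∈ Finset.range m, x ^ i}

/-- `alpha m = beta m ^ (1/2) + beta m ^ (-1/2)`. -/
noncomputable def alpha (m : ℕ) : ℝ :=
  Real.sqrt (beta m) + (Real.sqrt (beta m))⁻¹

/-- `λ* = √(2+√5)`. -/
noncomputable def lambdaStar : ℝ := Real.sqrt (2 + Real.sqrt 5)

/-- A spherical `L`-code in `ℝ^n`: a finite set of unit vectors whose pairwise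
inner products lie in `L`. -/
def SphericalCode (n : ℕ) (L : Set ℝ) (C : Finset (EuclideanSpace ℝ (Fin n))) : Prop :=
  (∀ v ∈ C, ‖v‖ = 1) ∧
  ∀ v ∈ C, ∀ w ∈ C, v ≠ w → (inner ℝ v w : ℝ) ∈ L

/-- `Nmax a n` : the maximum cardinality of a spherical `{-a, a}`-code in `ℝ^n`,
i.e. the maximum number of equiangular lines in `ℝ^n` with angle `arccos a`. -/
noncomputable def Nmax (a : ℝ) (n : ℕ) : ℕ :=
  sSup {k : ℕ | ∃ C : Finset (EuclideanSpace ℝ (Fin n)),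
    SphericalCode n {-a, a} C ∧ C.card = k}

/-- The spectral radius order of `l` : the smallest number of vertices of a finite
simple graph whose spectral radius is `l`; `⊤` if there is no such graph. -/
noncomputable def specOrder (l : ℝ) : ℕ∞ :=
  sInf ((fun k : ℕ => (k : ℕ∞)) '' {k : ℕ | ∃ G : SimpleGraph (Fin k), specRad G = l})

/-- The set `L(α, t)` from the paper. -/
noncomputable def Lset (a : ℝ) (t : ℕ) : Set ℝ :=
  { -(1 / ((1 - a) / (2 * a))) * (1 - 1 / ((t : ℝ) + a⁻¹)) + 1 / ((t : ℝ) + a⁻¹),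
    1 / ((t : ℝ) + a⁻¹) }

/-- The underlying graph of a spherical code: vertices are the code vectors, two
of them adjacent iff their inner product is negative. -/
def codeGraph {n : ℕ} (C : Finset (EuclideanSpace ℝ (Fin n))) :
    SimpleGraph {v // v ∈ C} :=
  SimpleGraph.fromRel (fun v w =>
    (inner ℝ (v : EuclideanSpace ℝ (Fin n)) (w : EuclideanSpace ℝ (Fin n)) : ℝ) < 0)

/-- `x` is a totally real algebraic integer: it is integral over `ℤ` and every
complex root of its minimal polynomial over `ℚ` is real. -/
def TotallyRealAlgInt (x : ℝ) : Prop :=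
  IsIntegral ℤ x ∧ ∀ z : ℂ, Polynomial.aeval z (minpoly ℚ x) = 0 → z.im = 0


local notation "⟪" x ", " y "⟫" => @inner ℝ _ _ x y
abbrev EE (n : ℕ) := EuclideanSpace ℝ (Fin n)

noncomputable def ramR : ℕ → ℕ → ℕ
  | 0, _ => 0
  | _+1, 0 => 0
  | s+1, c+1 => ramR s (c+1) + ramR (s+1) c + 1

lemma ramsey_lemma {V : Type*} (P : V → V → Prop) (hsymm : ∀ a b, P a b → P b a) :
    ∀ s c : ℕ, ∀ S : Finset V, ramR s c ≤ S.card →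
    (∃ T ⊆ S, T.card = s ∧ ∀ v ∈ T, ∀ w ∈ T, v ≠ w → P v w) ∨
    (∃ T ⊆ S, T.card = c ∧ ∀ v ∈ T, ∀ w ∈ T, v ≠ w → ¬ P v w) := by
  intro s
  induction s with
  | zero =>
    intro c S _
    exact Or.inl ⟨∅, Finset.empty_subset _, Finset.card_empty, by simp⟩
  | succ s ihs =>
    intro c
    induction c with
    | zero =>
      intro S _
      exact Or.inr ⟨∅, Finset.empty_subset _, Finset.card_empty, by simp⟩
    | succ c ihc =>
      intro S hS
      have hSne : S.Nonempty := by
        rw [← Finset.card_pos]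
        have : 0 < ramR (s+1) (c+1) := by rw [ramR]; omega
        omega
      obtain ⟨x, hx⟩ := hSne
      set S' := S.erase x with hS'
      have hcard : S'.card = S.card - 1 := Finset.card_erase_of_mem hx
      set N1 := S'.filter (fun v => P x v) with hN1
      set N2 := S'.filter (fun v => ¬ P x v) with hN2
      have hsplit : N1.card + N2.card = S'.card := Finset.card_filter_add_card_filter_not _
      have hram : ramR (s+1) (c+1) = ramR s (c+1) + ramR (s+1) c + 1 := by rw [ramR]
      by_cases h1 : ramR s (c+1) ≤ N1.card
      · rcases ihs (c+1) N1 h1 with ⟨T, hTsub, hTcard, hTP⟩ | ⟨T, hTsub, hTcard, hTP⟩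
        · -- extend with x
          refine Or.inl ⟨insert x T, ?_, ?_, ?_⟩
          · intro v hv
            rcases Finset.mem_insert.mp hv with rfl | hv
            · exact hx
            · exact Finset.mem_of_mem_erase (Finset.mem_of_mem_filter _ (hTsub hv))
          · have hxT : x ∉ T := by
              intro hxT
              have := hTsub hxT
              exact (Finset.notMem_erase x S) (Finset.mem_of_mem_filter _ this)
            rw [Finset.card_insert_of_notMem hxT, hTcard]
          · intro v hv w hw hvw
            rcases Finset.mem_insert.mp hv with hv1 | hv2
            · subst hv1
              rcases Finset.mem_insert.mp hw with hw1 | hw2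
              · exact absurd hw1.symm hvw
              · exact (Finset.mem_filter.mp (hTsub hw2)).2
            · rcases Finset.mem_insert.mp hw with hw1 | hw2
              · subst hw1
                exact hsymm _ _ (Finset.mem_filter.mp (hTsub hv2)).2
              · exact hTP v hv2 w hw2 hvw
        · exact Or.inr ⟨T, fun v hv => Finset.mem_of_mem_erase (Finset.mem_of_mem_filter _ (hTsub hv)), hTcard, hTP⟩
      · have h2 : ramR (s+1) c ≤ N2.card := by omega
        rcases ihc N2 h2 with ⟨T, hTsub, hTcard, hTP⟩ | ⟨T, hTsub, hTcard, hTP⟩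
        · exact Or.inl ⟨T, fun v hv => Finset.mem_of_mem_erase (Finset.mem_of_mem_filter _ (hTsub hv)), hTcard, hTP⟩
        · refine Or.inr ⟨insert x T, ?_, ?_, ?_⟩
          · intro v hv
            rcases Finset.mem_insert.mp hv with rfl | hv
            · exact hx
            · exact Finset.mem_of_mem_erase (Finset.mem_of_mem_filter _ (hTsub hv))
          · have hxT : x ∉ T := by
              intro hxT
              have := hTsub hxT
              exact (Finset.notMem_erase x S) (Finset.mem_of_mem_filter _ this)
            rw [Finset.card_insert_of_notMem hxT, hTcard]
          · intro v hv w hw hvw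
            rcases Finset.mem_insert.mp hv with hv1 | hv2
            · subst hv1
              rcases Finset.mem_insert.mp hw with hw1 | hw2
              · exact absurd hw1.symm hvw
              · exact (Finset.mem_filter.mp (hTsub hw2)).2
            · rcases Finset.mem_insert.mp hw with hw1 | hw2
              · subst hw1
                intro hP; exact (Finset.mem_filter.mp (hTsub hv2)).2 (hsymm _ _ hP)
              · exact hTP v hv2 w hw2 hvw


lemma core_ineq (a t d s : ℝ) (ha : 0 < a) (ha1 : a < 1) (ht2 : 2 ≤ t)
    (htt : ((1-a)/(2*a))^2 + 1 < t) (hd : |d| ≤ t - 2)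
    (hs : 8*t^4*(1-a) < s * (4*a*(t-1)*(4*a^2*(t-1) - (1-a)^2))) (hs1 : 1 ≤ s) :
    ∃ aa cc : ℝ,
      a*(t*aa+d)^2 + (1-a)*(t*aa^2+2*aa*d+t) + 2*cc*s*a*(aa*d+t)
        + cc^2*((1-a)*s+a*s^2) < 0 := by
  have ha0 : (0:ℝ) < 1 - a := by linarith
  have ht0 : (0:ℝ) < t := by linarith
  have hd2 : d^2 ≤ (t-2)^2 := by
    have h1 : |d| ≤ |t-2| := by rwa [abs_of_nonneg (by linarith : (0:ℝ) ≤ t - 2)]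
    calc d^2 = |d|^2 := (sq_abs d).symm
    _ ≤ |t-2|^2 := by nlinarith [abs_nonneg d]
    _ = (t-2)^2 := sq_abs _
  obtain ⟨E, hE⟩ : ∃ x : ℝ, x = t^2 - d^2 := ⟨_, rfl⟩
  have hE4 : 4*(t-1) ≤ E := by rw [hE]; nlinarith [hd2]
  have hEpos : 0 < E := by linarith
  obtain ⟨M, hM⟩ : ∃ x : ℝ, x = a*E + (1-a)*t := ⟨_, rfl⟩
  have hMpos : 0 < M := by rw [hM]; positivity
  have hMne : M ≠ 0 := ne_of_gt hMpos
  obtain ⟨γ, hγ⟩ : ∃ x : ℝ, x = 4*a^2*(t-1) - (1-a)^2 := ⟨_, rfl⟩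
  have hγpos : 0 < γ := by
    have h4a : (0:ℝ) < (2*a)^2 := by positivity
    have h5 : (1-a)^2/(2*a)^2 < t - 1 := by
      rw [← div_pow]; linarith
    have h6 : (1-a)^2 < (t-1)*(2*a)^2 := (div_lt_iff₀ h4a).mp h5
    rw [hγ]; nlinarith [h6]
  rw [← hγ] at hs
  clear htt hd
  obtain ⟨aa, haa⟩ : ∃ x : ℝ, x = -(1-a)*d/M := ⟨_, rfl⟩
  have hprod : aa * M = -(1-a)*d := by rw [haa]; field_simp
  obtain ⟨X3, hX3⟩ : ∃ x : ℝ, x = aa*d + t := ⟨_, rfl⟩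
  obtain ⟨C, hC⟩ : ∃ x : ℝ, x = a*(t*aa+d)^2 + (1-a)*(t*aa^2+2*aa*d+t) := ⟨_, rfl⟩
  have hg : a*X3^2 - C = a*E - (1-a)*t - aa^2*M - 2*aa*((1-a)*d) := by
    rw [hX3, hC, hM, hE]; ring
  have hid : (a*X3^2 - C)*M = E*(a^2*E - (1-a)^2) := by
    have step : (a*X3^2 - C)*M
        = (a*E - (1-a)*t)*M - (aa*M)^2 - 2*(aa*M)*((1-a)*d) := by
      rw [hg]; ring
    rw [step, hprod, hM, hE]; ring
  have hEg : 4*(t-1)*γ ≤ E*(a^2*E - (1-a)^2) := by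
    have i0 : a^2*(4*(t-1)) ≤ a^2*E := mul_le_mul_of_nonneg_left hE4 (sq_nonneg a)
    have i1 : γ ≤ a^2*E - (1-a)^2 := by rw [hγ]; linarith
    exact mul_le_mul hE4 i1 (le_of_lt hγpos) (le_of_lt hEpos)
  have hδ : 0 < a*X3^2 - C := by
    have h1 : 0 < E*(a^2*E - (1-a)^2) := by
      have h0 : (0:ℝ) < 4*(t-1)*γ := mul_pos (by linarith) hγpos
      linarith
    by_contra hcon
    push_neg at hcon
    have := mul_nonpos_of_nonpos_of_nonneg hcon hMpos.le
    linarith [hid.symm ▸ this]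
  have haa2 : aa^2 * t^2 ≤ d^2 := by
    have h1 : (1-a)*t ≤ M := by
      rw [hM]
      have : 0 ≤ a*E := by positivity
      linarith
    have h1' : (0:ℝ) ≤ (1-a)*t := by positivity
    have hsq : ((1-a)*t)^2 ≤ M^2 := by
      have := pow_le_pow_left₀ h1' h1 2
      exact this
    have h2 : aa^2*((1-a)*t)^2 ≤ aa^2*M^2 := mul_le_mul_of_nonneg_left hsq (sq_nonneg aa)
    have h3 : aa^2*M^2 = (1-a)^2*d^2 := by
      have e : aa^2*M^2 = (aa*M)^2 := by ring
      rw [e, hprod]; ring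
    rw [h3] at h2
    have h4 : (1-a)^2*(aa^2*t^2) ≤ (1-a)^2*d^2 := by
      have e : (1-a)^2*(aa^2*t^2) = aa^2*((1-a)*t)^2 := by ring
      rw [e]; exact h2
    have hpos : (0:ℝ) < (1-a)^2 := by positivity
    exact le_of_mul_le_mul_left h4 hpos
  have hdt : d^2 ≤ t^2 := by nlinarith [hd2]
  have hC0 : 0 ≤ C := by
    have h0 : 0 ≤ t*(t*aa^2 + 2*aa*d + t) := by
      nlinarith [sq_nonneg (aa*t + d), hdt]
    have h1 : 0 ≤ t*aa^2 + 2*aa*d + t := nonneg_of_mul_nonneg_right h0 ht0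
    have h2 : 0 ≤ a*(t*aa+d)^2 := by positivity
    have h3 : 0 ≤ (1-a)*(t*aa^2+2*aa*d+t) := mul_nonneg ha0.le h1
    rw [hC]; linarith
  have hC8 : C ≤ 8*t^2 := by
    have h1 : (t*aa+d)^2 ≤ 4*t^2 := by nlinarith [haa2, hdt, sq_nonneg (t*aa - d)]
    have h2' : t*(t*aa^2 + 2*aa*d + t) ≤ t*(4*t) := by
      nlinarith [haa2, hdt, sq_nonneg (aa*t - d)]
    have h2 : t*aa^2 + 2*aa*d + t ≤ 4*t := le_of_mul_le_mul_left h2' ht0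
    have h3 : a*(t*aa+d)^2 ≤ a*(4*t^2) := mul_le_mul_of_nonneg_left h1 ha.le
    have h4 : (1-a)*(t*aa^2+2*aa*d+t) ≤ (1-a)*(4*t) := mul_le_mul_of_nonneg_left h2 ha0.le
    have h6 : a*(4*t^2) ≤ 1*(4*t^2) := mul_le_mul_of_nonneg_right ha1.le (by positivity)
    have h7 : (1-a)*(4*t) ≤ 1*(4*t) := mul_le_mul_of_nonneg_right (by linarith) (by linarith)
    have h8 : 4*t ≤ 4*t^2 := by nlinarith [ht2, ht0]
    rw [hC]; linarith
  have hM2 : M ≤ t^2 := by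
    have p3 : a*E ≤ a*t^2 := by
      rw [hE]
      have : t^2 - d^2 ≤ t^2 := by nlinarith [sq_nonneg d]
      exact mul_le_mul_of_nonneg_left this ha.le
    have h8 : t ≤ t^2 := by nlinarith [ht2, ht0]
    have p4 : (1-a)*t ≤ (1-a)*t^2 := mul_le_mul_of_nonneg_left h8 ha0.le
    have p5 : a*t^2 + (1-a)*t^2 = t^2 := by ring
    rw [hM]; linarith
  have hspos : 0 < s := by linarith
  have hkey : (1-a)*C < s*a*(a*X3^2 - C) := by
    have h1 : s*a*(a*X3^2 - C)*M = s*a*(E*(a^2*E - (1-a)^2)) := by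
      rw [mul_assoc (s*a), hid]
    have h2 : s*a*(4*(t-1)*γ) ≤ s*a*(E*(a^2*E - (1-a)^2)) :=
      mul_le_mul_of_nonneg_left hEg (by positivity)
    have h3 : 8*t^4*(1-a) < s*a*(4*(t-1)*γ) := by
      have e : s*(4*a*(t-1)*γ) = s*a*(4*(t-1)*γ) := by ring
      linarith [e.le, e.ge]
    have h4 : (1-a)*C*M ≤ (1-a)*C*t^2 :=
      mul_le_mul_of_nonneg_left hM2 (by positivity)
    have h5 : (1-a)*C*t^2 ≤ (1-a)*(8*t^2)*t^2 :=
      mul_le_mul_of_nonneg_right (mul_le_mul_of_nonneg_left hC8 ha0.le) (sq_nonneg t)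
    have h5' : (1-a)*(8*t^2)*t^2 = 8*t^4*(1-a) := by ring
    have h6 : (1-a)*C*M < s*a*(a*X3^2-C)*M := by linarith
    exact lt_of_mul_lt_mul_right h6 (le_of_lt hMpos)
  obtain ⟨A, hA⟩ : ∃ x : ℝ, x = (1-a)*s + a*s^2 := ⟨_, rfl⟩
  have hApos : 0 < A := by rw [hA]; positivity
  obtain ⟨P, hP⟩ : ∃ x : ℝ, x = s*a*X3 := ⟨_, rfl⟩
  refine ⟨aa, -P/A, ?_⟩
  have hgoal : a*(t*aa+d)^2 + (1-a)*(t*aa^2+2*aa*d+t) + 2*(-P/A)*s*a*(aa*d+t)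
      + (-P/A)^2*((1-a)*s+a*s^2) = C - P^2/A := by
    rw [hC, hP, hX3, hA]
    have hAne : (1-a)*s + a*s^2 ≠ 0 := by positivity
    field_simp
    ring
  rw [hgoal, sub_neg, lt_div_iff₀ hApos]
  have h7 : s*((1-a)*C) < s*(s*a*(a*X3^2 - C)) :=
    mul_lt_mul_of_pos_left hkey hspos
  have e1 : C*A = s*((1-a)*C) + s^2*a*C := by rw [hA]; ring
  have e2 : s*(s*a*(a*X3^2 - C)) = P^2 - s^2*a*C := by rw [hP]; ring
  rw [e2] at h7
  linarith [e1, h7]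


lemma sum_inner_sum {n : ℕ} {ι κ : Type*} (s : Finset ι) (s2 : Finset κ)
    (f : ι → EE n) (g : κ → EE n) :
    ⟪∑ i ∈ s, f i, ∑ j ∈ s2, g j⟫ = ∑ i ∈ s, ∑ j ∈ s2, ⟪f i, g j⟫ := by
  rw [sum_inner]
  exact Finset.sum_congr rfl fun i _ => inner_sum _ _ _

lemma inner_self_one {n : ℕ} {v : EE n} (hv : ‖v‖ = 1) : ⟪v, v⟫ = 1 := by
  rw [real_inner_self_eq_norm_mul_norm, hv, mul_one]

lemma gram_expand (t : ℕ) (x : Fin t → ℝ) (c : ℝ)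
    (g : Fin t → Fin t → ℝ) (hg : ∀ i j, g i j = if i = j then 1 else c) :
    ∑ i, ∑ j, (x i * x j * g i j) = c*(∑ i, x i)^2 + (1-c)*(∑ i, (x i)^2) := by
  have : ∀ i j, x i * x j * g i j
      = x i * x j * c + (if i = j then x i * x j * (1-c) else 0) := by
    intro i j
    rw [hg i j]
    split_ifs with h <;> ring
  have e0 : ∑ i, ∑ j, (x i * x j * g i j)
      = (∑ i, ∑ j, x i * x j * c) + ∑ i, ∑ j, (if i = j then x i * x j * (1-c) else 0) := by
    rw [← Finset.sum_add_distrib]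
    refine Finset.sum_congr rfl fun i _ => ?_
    rw [← Finset.sum_add_distrib]
    exact Finset.sum_congr rfl fun j _ => this i j
  have e1 : ∑ i, ∑ j, x i * x j * c = c * ((∑ i, x i) * (∑ j, x j)) := by
    rw [Finset.sum_mul_sum, Finset.mul_sum]
    refine Finset.sum_congr rfl fun i _ => ?_
    rw [Finset.mul_sum]
    exact Finset.sum_congr rfl fun j _ => by ring
  have e2 : ∑ i, ∑ j, (if i = j then x i * x j * (1-c) else 0)
      = (1-c) * ∑ i, (x i)^2 := by
    rw [Finset.mul_sum]
    refine Finset.sum_congr rfl fun i _ => ?_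
    rw [Finset.sum_ite_eq Finset.univ i (fun j => x i * x j * (1-c))]
    simp only [Finset.mem_univ, if_true]
    ring
  rw [e0, e1, e2, sq]


lemma gadget_contradiction {n : ℕ} (a : ℝ) (ha : 0 < a) (ha1 : a < 1) (t : ℕ) (ht2 : 2 ≤ t)
    (htt : ((1-a)/(2*a))^2 + 1 < (t:ℝ))
    (y : Fin t → EE n) (f : Fin t → Bool) (W : Finset (EE n))
    (hyu : ∀ i, ‖y i‖ = 1)
    (hyy : ∀ i j, i ≠ j → ⟪y i, y j⟫ = a)
    (hWu : ∀ w ∈ W, ‖w‖ = 1)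
    (hWW : ∀ w ∈ W, ∀ w' ∈ W, w ≠ w' → ⟪w, w'⟫ = a)
    (hyW : ∀ i, ∀ w ∈ W, ⟪y i, w⟫ = (if f i then a else -a))
    (hk1 : ∃ i, f i = true) (hk2 : ∃ j, f j = false)
    (hs : 8*(t:ℝ)^4*(1-a) < (W.card:ℝ) * (4*a*((t:ℝ)-1)*(4*a^2*((t:ℝ)-1) - (1-a)^2)))
    (hs1 : 1 ≤ W.card) : False := by
  set k : ℕ := (Finset.univ.filter (fun i => f i = true)).card with hk
  set kf : ℕ := (Finset.univ.filter (fun i => ¬ (f i = true))).card with hkf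
  have hkkf : k + kf = t := by
    rw [hk, hkf, Finset.card_filter_add_card_filter_not, Finset.card_univ,
      Fintype.card_fin]
  have hk1' : 1 ≤ k := by
    obtain ⟨i, hi⟩ := hk1
    have : i ∈ Finset.univ.filter (fun i => f i = true) := by simp [hi]
    have := Finset.card_pos.mpr ⟨i, this⟩
    omega
  have hk2' : 1 ≤ kf := by
    obtain ⟨j, hj⟩ := hk2
    have : j ∈ Finset.univ.filter (fun i => ¬ (f i = true)) := by simp [hj]
    have := Finset.card_pos.mpr ⟨j, this⟩
    omega
  set d : ℝ := 2*(k:ℝ) - t with hd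
  have habs : |d| ≤ (t:ℝ) - 2 := by
    rw [abs_le, hd]
    constructor
    · have : (k:ℝ) ≥ 1 := by exact_mod_cast hk1'
      have h2 : (k:ℝ) + (kf:ℝ) = t := by exact_mod_cast hkkf
      have : (kf:ℝ) ≥ 1 := by exact_mod_cast hk2'
      linarith
    · have h2 : (k:ℝ) + (kf:ℝ) = t := by exact_mod_cast hkkf
      have : (kf:ℝ) ≥ 1 := by exact_mod_cast hk2'
      linarith
  obtain ⟨aa, cc, hcore⟩ := core_ineq a (t:ℝ) d (W.card:ℝ) ha ha1
    (by exact_mod_cast ht2) htt habs hs (by exact_mod_cast hs1)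
  -- now build z
  set ε : Fin t → ℝ := fun i => if f i then 1 else -1 with hε
  set x : Fin t → ℝ := fun i => aa + ε i with hx
  set S1 : EE n := ∑ i, x i • y i with hS1
  set S2 : EE n := ∑ w ∈ W, w with hS2
  set z : EE n := S1 + cc • S2 with hz
  set s : ℝ := (W.card : ℝ) with hsdef
  -- epsilon sums
  have hε2 : ∀ i, ε i ^ 2 = 1 := by
    intro i; rw [hε]; by_cases h : f i <;> simp [h] <;> norm_num
  have hεsum : ∑ i, ε i = d := by
    have e : ∀ i, ε i = 2*(if f i = true then (1:ℝ) else 0) - 1 := by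
      intro i; rw [hε]; by_cases h : f i <;> simp [h] <;> norm_num
    rw [hd]
    calc ∑ i, ε i = ∑ i : Fin t, (2*(if f i = true then (1:ℝ) else 0) - 1) :=
          Finset.sum_congr rfl fun i _ => e i
    _ = 2*(∑ i : Fin t, (if f i = true then (1:ℝ) else 0)) - t := by
          rw [Finset.sum_sub_distrib, ← Finset.mul_sum, Finset.sum_const, Finset.card_univ,
            Fintype.card_fin, nsmul_eq_mul, mul_one]
    _ = 2*(k:ℝ) - t := by rw [Finset.sum_boole, hk]
  have hεa : ∀ i, (if f i = true then a else -a) = ε i * a := by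
    intro i; rw [hε]; by_cases h : f i <;> simp [h]
  have hxsum : ∑ i, x i = (t:ℝ)*aa + d := by
    rw [hx]
    rw [Finset.sum_add_distrib, Finset.sum_const, Finset.card_univ, Fintype.card_fin,
      nsmul_eq_mul, hεsum]
  have hxsq : ∑ i, (x i)^2 = (t:ℝ)*aa^2 + 2*aa*d + t := by
    have e : ∀ i, (x i)^2 = aa^2 + 2*aa*(ε i) + 1 := by
      intro i
      simp only [hx]
      nlinarith [hε2 i]
    calc ∑ i, (x i)^2 = ∑ i : Fin t, (aa^2 + 2*aa*(ε i) + 1) :=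
          Finset.sum_congr rfl fun i _ => e i
    _ = (t:ℝ)*aa^2 + 2*aa*d + t := by
          rw [Finset.sum_add_distrib, Finset.sum_add_distrib, Finset.sum_const,
            Finset.card_univ, Fintype.card_fin, Finset.sum_const, Finset.card_univ,
            Fintype.card_fin, ← Finset.mul_sum, hεsum, nsmul_eq_mul, nsmul_eq_mul]
          ring
  have hxε : ∑ i, x i * ε i = aa*d + (t:ℝ) := by
    have e : ∀ i, x i * ε i = aa*(ε i) + 1 := by
      intro i
      simp only [hx]
      nlinarith [hε2 i]
    calc ∑ i, x i * ε i = ∑ i : Fin t, (aa*(ε i) + 1) := Finset.sum_congr rfl fun i _ => e i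
    _ = aa*d + (t:ℝ) := by
          rw [Finset.sum_add_distrib, ← Finset.mul_sum, hεsum, Finset.sum_const,
            Finset.card_univ, Fintype.card_fin, nsmul_eq_mul, mul_one]
  have hgy : ∀ i j, ⟪y i, y j⟫ = if i = j then (1:ℝ) else a := by
    intro i j
    by_cases h : i = j
    · rw [h, if_pos rfl]; exact inner_self_one (hyu j)
    · rw [if_neg h]; exact hyy i j h
  have h11 : ⟪S1, S1⟫ = a*((t:ℝ)*aa+d)^2 + (1-a)*((t:ℝ)*aa^2+2*aa*d+t) := by
    rw [hS1]
    calc ⟪∑ i, x i • y i, ∑ j, x j • y j⟫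
        = ∑ i, ∑ j, ⟪x i • y i, x j • y j⟫ := sum_inner_sum _ _ _ _
    _ = ∑ i, ∑ j, (x i * x j * ⟪y i, y j⟫) := by
          refine Finset.sum_congr rfl fun i _ => Finset.sum_congr rfl fun j _ => ?_
          rw [real_inner_smul_left, real_inner_smul_right]; ring
    _ = a*(∑ i, x i)^2 + (1-a)*(∑ i, (x i)^2) :=
          gram_expand t x a (fun i j => ⟪y i, y j⟫) hgy
    _ = a*((t:ℝ)*aa+d)^2 + (1-a)*((t:ℝ)*aa^2+2*aa*d+t) := by rw [hxsum, hxsq]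
  have h12 : ⟪S1, S2⟫ = s*a*(aa*d+(t:ℝ)) := by
    rw [hS1, hS2]
    calc ⟪∑ i, x i • y i, ∑ w ∈ W, w⟫
        = ∑ i, ∑ w ∈ W, ⟪x i • y i, w⟫ := sum_inner_sum _ _ _ _
    _ = ∑ i, ∑ w ∈ W, x i * (ε i * a) := by
          refine Finset.sum_congr rfl fun i _ => Finset.sum_congr rfl fun w hw => ?_
          rw [real_inner_smul_left, hyW i w hw, hεa i]
    _ = ∑ i, s * (x i * (ε i * a)) := by
          refine Finset.sum_congr rfl fun i _ => ?_
          rw [Finset.sum_const, nsmul_eq_mul, hsdef]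
    _ = s*a*(aa*d+(t:ℝ)) := by
          rw [← Finset.mul_sum]
          have : ∑ i, x i * (ε i * a) = a * ∑ i, x i * ε i := by
            rw [Finset.mul_sum]
            exact Finset.sum_congr rfl fun i _ => by ring
          rw [this, hxε]; ring
  have h22 : ⟪S2, S2⟫ = (1-a)*s + a*s^2 := by
    rw [hS2]
    have hrow : ∀ w ∈ W, ∑ w' ∈ W, ⟪w, w'⟫ = 1 + (s-1)*a := by
      intro w hw
      rw [← Finset.add_sum_erase W _ hw, inner_self_one (hWu w hw)]
      have : ∑ w' ∈ W.erase w, ⟪w, w'⟫ = ∑ w' ∈ W.erase w, a :=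
        Finset.sum_congr rfl fun w' hw' =>
          hWW w hw w' (Finset.mem_of_mem_erase hw') (Finset.ne_of_mem_erase hw').symm
      rw [this, Finset.sum_const, Finset.card_erase_of_mem hw, nsmul_eq_mul]
      have hcast : ((W.card - 1 : ℕ) : ℝ) = s - 1 := by
        rw [hsdef, Nat.cast_sub hs1, Nat.cast_one]
      rw [hcast]
    calc ⟪∑ w ∈ W, w, ∑ w' ∈ W, w'⟫ = ∑ w ∈ W, ∑ w' ∈ W, ⟪w, w'⟫ :=
          sum_inner_sum _ _ _ _
    _ = ∑ w ∈ W, (1 + (s-1)*a) := Finset.sum_congr rfl hrow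
    _ = s * (1 + (s-1)*a) := by rw [Finset.sum_const, nsmul_eq_mul, hsdef]
    _ = (1-a)*s + a*s^2 := by ring
  have hzz : ⟪z, z⟫ = a*((t:ℝ)*aa+d)^2 + (1-a)*((t:ℝ)*aa^2+2*aa*d+(t:ℝ))
      + 2*cc*s*a*(aa*d+(t:ℝ)) + cc^2*((1-a)*s+a*s^2) := by
    rw [hz]
    rw [real_inner_add_add_self]
    rw [real_inner_smul_right, real_inner_smul_left, real_inner_smul_right]
    rw [h11, h12, h22]
    ring
  have h0 : (0:ℝ) ≤ ⟪z, z⟫ := real_inner_self_nonneg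
  rw [hzz] at h0
  linarith


lemma Dfacts (a T : ℝ) (ha : 0 < a) (ha1 : a < 1) (hT : 2 ≤ T) :
    0 < 1 + (T-1)*a ∧ T*a^2/(1+(T-1)*a) < 1 := by
  have hden : 0 < 1 + (T-1)*a := by nlinarith
  refine ⟨hden, ?_⟩
  rw [div_lt_one hden]
  nlinarith [mul_pos (by linarith : (0:ℝ) < 1 - a) (by nlinarith : (0:ℝ) < 1 + T*a)]

lemma val_id (a T : ℝ) (ha : 0 < a) (ha1 : a < 1) (hT : 2 ≤ T) :
    (a - T*a^2/(1+(T-1)*a)) / (1 - T*a^2/(1+(T-1)*a)) = 1/(T + a⁻¹)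
    ∧ (-a - T*a^2/(1+(T-1)*a)) / (1 - T*a^2/(1+(T-1)*a))
        = -(1 / ((1 - a) / (2 * a))) * (1 - 1 / (T + a⁻¹)) + 1 / (T + a⁻¹) := by
  obtain ⟨hden, hD1⟩ := Dfacts a T ha ha1 hT
  have hdne : 1 + (T-1)*a ≠ 0 := ne_of_gt hden
  have h1D : 0 < 1 - T*a^2/(1+(T-1)*a) := by linarith
  have h1Dne : 1 - T*a^2/(1+(T-1)*a) ≠ 0 := ne_of_gt h1D
  have hTa : 0 < T + a⁻¹ := by positivity
  have hTane : T + a⁻¹ ≠ 0 := ne_of_gt hTa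
  have hane : a ≠ 0 := ne_of_gt ha
  have h1ane : 1 - a ≠ 0 := by intro h; nlinarith
  constructor
  · rw [div_eq_div_iff h1Dne hTane]
    generalize hq : 1 + (T-1)*a = q at *
    field_simp
    subst hq
    ring
  · rw [div_eq_iff h1Dne]
    generalize hq : 1 + (T-1)*a = q at *
    field_simp
    subst hq
    ring

lemma proj_inner {n : ℕ} (a : ℝ) (t : ℕ) (ha : 0 < a) (ha1 : a < 1) (ht2 : 2 ≤ t)
    (y : Fin t → EE n) (hyu : ∀ i, ‖y i‖ = 1) (hyy : ∀ i j, i ≠ j → ⟪y i, y j⟫ = a)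
    (v w : EE n)
    (hva : ∀ i, ⟪v, y i⟫ = a) (hwa : ∀ i, ⟪w, y i⟫ = a) :
    ⟪(Real.sqrt (1 - ((t:ℝ)*a^2/(1+((t:ℝ)-1)*a))))⁻¹ • (v - (a/(1+((t:ℝ)-1)*a)) • (∑ i, y i)),
     (Real.sqrt (1 - ((t:ℝ)*a^2/(1+((t:ℝ)-1)*a))))⁻¹ • (w - (a/(1+((t:ℝ)-1)*a)) • (∑ i, y i))⟫
     = (⟪v,w⟫ - (t:ℝ)*a^2/(1+((t:ℝ)-1)*a)) / (1 - (t:ℝ)*a^2/(1+((t:ℝ)-1)*a)) := by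
  have hT2 : (2:ℝ) ≤ (t:ℝ) := by exact_mod_cast ht2
  obtain ⟨hden, hD1⟩ := Dfacts a (t:ℝ) ha ha1 hT2
  have hdne : 1 + ((t:ℝ)-1)*a ≠ 0 := ne_of_gt hden
  have h1D : 0 < 1 - (t:ℝ)*a^2/(1+((t:ℝ)-1)*a) := by linarith
  set D : ℝ := (t:ℝ)*a^2/(1+((t:ℝ)-1)*a) with hD
  set c : ℝ := a/(1+((t:ℝ)-1)*a) with hc
  set S : EE n := ∑ i, y i with hS
  have hr2 : (Real.sqrt (1-D))⁻¹ * (Real.sqrt (1-D))⁻¹ = (1-D)⁻¹ := by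
    rw [← mul_inv]
    rw [Real.mul_self_sqrt (le_of_lt h1D)]
  have hvS : ⟪v, S⟫ = (t:ℝ)*a := by
    rw [hS, inner_sum]
    rw [Finset.sum_congr rfl (fun i _ => hva i), Finset.sum_const, Finset.card_univ,
      Fintype.card_fin, nsmul_eq_mul]
  have hwS : ⟪w, S⟫ = (t:ℝ)*a := by
    rw [hS, inner_sum]
    rw [Finset.sum_congr rfl (fun i _ => hwa i), Finset.sum_const, Finset.card_univ,
      Fintype.card_fin, nsmul_eq_mul]
  have hSS : ⟪S, S⟫ = (t:ℝ) + ((t:ℝ)^2 - t)*a := by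
    rw [hS]
    have hrow : ∀ i : Fin t, ⟪y i, ∑ j, y j⟫ = 1 + ((t:ℝ)-1)*a := by
      intro i
      rw [inner_sum]
      have : ∀ j ∈ (Finset.univ : Finset (Fin t)), ⟪y i, y j⟫
          = if i = j then (1:ℝ) else a := by
        intro j _
        by_cases h : i = j
        · rw [if_pos h, h]
          rw [real_inner_self_eq_norm_mul_norm, hyu j, mul_one]
        · rw [if_neg h]; exact hyy i j h
      rw [Finset.sum_congr rfl this]
      have e : ∀ j : Fin t, (if i = j then (1:ℝ) else a) = a + (if i = j then 1-a else 0) := by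
        intro j; split_ifs <;> ring
      rw [Finset.sum_congr rfl (fun j _ => e j), Finset.sum_add_distrib, Finset.sum_const,
        Finset.card_univ, Fintype.card_fin, Finset.sum_ite_eq Finset.univ i (fun _ => (1:ℝ)-a)]
      simp only [Finset.mem_univ, if_true, nsmul_eq_mul]
      ring
    rw [sum_inner, Finset.sum_congr rfl (fun i _ => hrow i), Finset.sum_const,
      Finset.card_univ, Fintype.card_fin, nsmul_eq_mul]
    ring
  have hexp : ⟪v - c • S, w - c • S⟫ = ⟪v,w⟫ - D := by
    rw [inner_sub_left, inner_sub_right, inner_sub_right, real_inner_smul_right,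
      real_inner_smul_left, real_inner_smul_left, real_inner_smul_right,
      real_inner_comm w S, hwS, hvS, hSS]
    have hnum : c*(c*((t:ℝ) + ((t:ℝ)^2-(t:ℝ))*a)) - 2*(c*((t:ℝ)*a)) = -D := by
      rw [hc, hD]; field_simp; ring
    linear_combination hnum
  rw [real_inner_smul_left, real_inner_smul_right, ← mul_assoc, hr2, hexp]
  rw [div_eq_inv_mul]


lemma neg_clique {n : ℕ} (a : ℝ) (ha : 0 < a) (T : Finset (EE n))
    (hu : ∀ v ∈ T, ‖v‖ = 1)
    (hneg : ∀ v ∈ T, ∀ w ∈ T, v ≠ w → ⟪v, w⟫ = -a) :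
    ((T.card : ℝ)) ≤ 1 + 1/a := by
  rcases Finset.eq_empty_or_nonempty T with rfl | ⟨v₀, hv₀⟩
  · simp; positivity
  have hm1 : 1 ≤ T.card := Finset.card_pos.mpr ⟨v₀, hv₀⟩
  have hmR : 1 ≤ ((T.card : ℕ) : ℝ) := by exact_mod_cast hm1
  have hrow : ∀ v ∈ T, ∑ w ∈ T, ⟪v, w⟫ = 1 + ((T.card:ℝ)-1)*(-a) := by
    intro v hv
    rw [← Finset.add_sum_erase T _ hv, inner_self_one (hu v hv)]
    have e : ∑ w ∈ T.erase v, ⟪v, w⟫ = ∑ w ∈ T.erase v, (-a) :=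
      Finset.sum_congr rfl fun w hw =>
        hneg v hv w (Finset.mem_of_mem_erase hw) (Finset.ne_of_mem_erase hw).symm
    rw [e, Finset.sum_const, Finset.card_erase_of_mem hv, nsmul_eq_mul,
      Nat.cast_sub hm1, Nat.cast_one]
  have h0 : (0:ℝ) ≤ (T.card:ℝ) * (1 + ((T.card:ℝ)-1)*(-a)) := by
    have hn : (0:ℝ) ≤ ⟪∑ v ∈ T, v, ∑ w ∈ T, w⟫ := real_inner_self_nonneg
    rw [sum_inner_sum T T (fun v => v) (fun w => w)] at hn
    rw [Finset.sum_congr rfl hrow, Finset.sum_const, nsmul_eq_mul] at hn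
    exact hn
  have h1 : 0 ≤ 1 + ((T.card:ℝ)-1)*(-a) := by
    by_contra hcon
    push_neg at hcon
    nlinarith
  have hm0 : (0:ℝ) ≤ (T.card:ℝ) - 1 := by linarith
  have h2 : a * ((T.card:ℝ) - 1) ≤ 1 := by nlinarith
  have h3 : (T.card:ℝ) - 1 ≤ 1/a := by
    rw [le_div_iff₀ ha]; linarith [mul_comm a ((T.card:ℝ)-1)]
  linarith

theorem stmt4 (a : ℝ) (ha : a ∈ Set.Ioo (0 : ℝ) 1) (t : ℕ)
    (ht : ((1 - a) / (2 * a)) ^ 2 + 1 < (t : ℝ)) :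
    ∃ K : ℕ, ∀ n : ℕ, ∀ Ca : Finset (EuclideanSpace ℝ (Fin n)),
      SphericalCode n {-a, a} Ca →
      ∃ C : Finset (EuclideanSpace ℝ (Fin n)),
        SphericalCode n (Lset a t) C ∧ Ca.card ≤ C.card + K := by
  unfold SphericalCode Lset
  obtain ⟨ha0, ha1⟩ := ha
  have h1t : (1:ℝ) < (t:ℝ) := by nlinarith [sq_nonneg ((1-a)/(2*a))]
  have ht2 : 2 ≤ t := by
    have : (1:ℕ) < t := by exact_mod_cast h1t
    omega
  have htR2 : (2:ℝ) ≤ (t:ℝ) := by exact_mod_cast ht2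
  -- negative clique size bound
  set cα : ℕ := ⌊1/a⌋₊ + 2 with hcα
  -- choose sStar
  set γ : ℝ := 4*a^2*((t:ℝ)-1) - (1-a)^2 with hγ
  have hγpos : 0 < γ := by
    have h4a : (0:ℝ) < (2*a)^2 := by positivity
    have h5 : (1-a)^2/(2*a)^2 < (t:ℝ) - 1 := by rw [← div_pow]; linarith
    have h6 : (1-a)^2 < ((t:ℝ)-1)*(2*a)^2 := (div_lt_iff₀ h4a).mp h5
    rw [hγ]; nlinarith
  have hppos : 0 < 4*a*((t:ℝ)-1)*γ := by
    have : (0:ℝ) < (t:ℝ)-1 := by linarith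
    have h4 : (0:ℝ) < 4*a := by linarith
    positivity
  obtain ⟨s₀, hs₀⟩ := exists_nat_gt ((8*(t:ℝ)^4*(1-a)) / (4*a*((t:ℝ)-1)*γ))
  set sStar : ℕ := s₀ + 1 with hsStar
  have hsStar1 : 1 ≤ sStar := by omega
  have hsStarIneq : 8*(t:ℝ)^4*(1-a) < (sStar:ℝ) * (4*a*((t:ℝ)-1)*γ) := by
    have h1 : (8*(t:ℝ)^4*(1-a)) / (4*a*((t:ℝ)-1)*γ) < (sStar:ℝ) := by
      have : (s₀:ℝ) ≤ (sStar:ℝ) := by exact_mod_cast Nat.le_succ s₀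
      linarith
    calc 8*(t:ℝ)^4*(1-a)
        = ((8*(t:ℝ)^4*(1-a)) / (4*a*((t:ℝ)-1)*γ)) * (4*a*((t:ℝ)-1)*γ) := by
          have ht1 : (t:ℝ) - 1 ≠ 0 := ne_of_gt (by linarith)
          field_simp
    _ < (sStar:ℝ) * (4*a*((t:ℝ)-1)*γ) := by
          exact mul_lt_mul_of_pos_right h1 hppos
  set K : ℕ := ramR t cα + t + 2^t * (ramR sStar cα + 1) with hK
  refine ⟨K, fun n Ca hCa => ?_⟩
  obtain ⟨hCau, hCap⟩ := hCa
  by_cases hsmall : Ca.card ≤ K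
  · exact ⟨∅, ⟨by simp, by simp⟩, by simpa using hsmall⟩
  push_neg at hsmall
  set P : EE n → EE n → Prop := fun v w => ⟪v, w⟫ = a with hP
  have hPsymm : ∀ v w : EE n, P v w → P w v := by
    intro v w h
    have hc : ⟪w, v⟫ = ⟪v, w⟫ := real_inner_comm v w
    exact hc.trans h
  -- no big negative cliques inside Ca
  have hnoneg : ∀ B : Finset (EE n), B ⊆ Ca →
      ¬ (∃ T ⊆ B, T.card = cα ∧ ∀ v ∈ T, ∀ w ∈ T, v ≠ w → ¬ P v w) := by
    rintro B hB ⟨T, hTB, hTcard, hT⟩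
    have hTCa : T ⊆ Ca := hTB.trans hB
    have hTn : ∀ v ∈ T, ∀ w ∈ T, v ≠ w → ⟪v, w⟫ = -a := by
      intro v hv w hw hvw
      have := hCap v (hTCa hv) w (hTCa hw) hvw
      rcases this with h | h
      · exact h
      · exact absurd h (hT v hv w hw hvw)
    have hbound := neg_clique a ha0 T (fun v hv => hCau v (hTCa hv)) hTn
    rw [hTcard] at hbound
    have hfl : (1:ℝ)/a < (⌊1/a⌋₊ : ℝ) + 1 := Nat.lt_floor_add_one _
    have : ((cα:ℕ):ℝ) = (⌊1/a⌋₊ : ℝ) + 2 := by rw [hcα]; push_cast; ring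
    linarith [this.le, this.ge]
  -- get the positive t-clique Y
  have hRam1 : ramR t cα ≤ Ca.card := by
    have : ramR t cα ≤ K := by rw [hK]; omega
    omega
  rcases ramsey_lemma P hPsymm t cα Ca hRam1 with ⟨T, hTCa, hTcard, hTpos⟩ | hTneg
  swap
  · exact absurd hTneg (hnoneg Ca (le_refl _))
  -- build y : Fin t → EE n
  have e : Fin t ≃ {x // x ∈ T} := (T.equivFin.trans (finCongr hTcard)).symm
  set y : Fin t → EE n := fun i => ((e i) : EE n) with hy
  have hyinj : Function.Injective y := by
    intro i j h
    exact e.injective (Subtype.ext h)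
  have hyT : ∀ i, y i ∈ T := fun i => (e i).2
  have hyCa : ∀ i, y i ∈ Ca := fun i => hTCa (hyT i)
  have hyu : ∀ i, ‖y i‖ = 1 := fun i => hCau _ (hyCa i)
  have hyy : ∀ i j, i ≠ j → ⟪y i, y j⟫ = a := by
    intro i j hij
    exact hTpos _ (hyT i) _ (hyT j) (fun h => hij (hyinj h))
  set Yset : Finset (EE n) := Finset.image y Finset.univ with hYset
  have hYcard : Yset.card = t := by
    rw [hYset, Finset.card_image_of_injective _ hyinj, Finset.card_univ, Fintype.card_fin]
  have hYsub : Yset ⊆ Ca := by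
    intro v hv
    rw [hYset, Finset.mem_image] at hv
    obtain ⟨i, _, rfl⟩ := hv
    exact hyCa i
  set Rest : Finset (EE n) := Ca \ Yset with hRest
  set GoodP : EE n → Prop := fun v => (∀ i, ⟪v, y i⟫ = a) ∨ (∀ i, ⟪v, y i⟫ = -a)
    with hGoodP
  set Good : Finset (EE n) := Rest.filter GoodP with hGood
  set Bad : Finset (EE n) := Rest.filter (fun v => ¬ GoodP v) with hBad
  have hRestCa : Rest ⊆ Ca := Finset.sdiff_subset
  have hRestY : ∀ v ∈ Rest, ∀ i, v ≠ y i := by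
    intro v hv i hvy
    rw [hRest, Finset.mem_sdiff] at hv
    exact hv.2 (by rw [hYset, hvy]; exact Finset.mem_image_of_mem y (Finset.mem_univ i))
  have hRestval : ∀ v ∈ Rest, ∀ i, ⟪v, y i⟫ = a ∨ ⟪v, y i⟫ = -a := by
    intro v hv i
    have := hCap v (hRestCa hv) (y i) (hyCa i) (hRestY v hv i)
    rcases this with h | h
    · exact Or.inr h
    · exact Or.inl h
  -- Bad is small
  have hBadBound : Bad.card ≤ 2^t * (ramR sStar cα + 1) := by
    by_contra hc
    push_neg at hc
    set pat : EE n → (Fin t → Bool) := fun v i => decide (⟪v, y i⟫ = a) with hpat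
    have hmaps : ∀ v ∈ Bad, pat v ∈ (Finset.univ : Finset (Fin t → Bool)) := by
      intro v _; exact Finset.mem_univ _
    have hcard : (Finset.univ : Finset (Fin t → Bool)).card * (ramR sStar cα) < Bad.card := by
      have h2t : (Finset.univ : Finset (Fin t → Bool)).card = 2^t := by
        rw [Finset.card_univ]
        rw [Fintype.card_fun]
        simp
      rw [h2t]
      have : 2^t * ramR sStar cα ≤ 2^t * (ramR sStar cα + 1) := by
        exact Nat.mul_le_mul_left _ (by omega)
      omega
    obtain ⟨f, _, hfiber⟩ :=
      Finset.exists_lt_card_fiber_of_mul_lt_card_of_maps_to hmaps hcard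
    set B₁ : Finset (EE n) := Bad.filter (fun v => pat v = f) with hB₁
    have hB₁Bad : B₁ ⊆ Bad := Finset.filter_subset _ _
    have hB₁Rest : B₁ ⊆ Rest := hB₁Bad.trans (Finset.filter_subset _ _)
    have hB₁Ca : B₁ ⊆ Ca := hB₁Rest.trans hRestCa
    have hB₁val : ∀ v ∈ B₁, ∀ i, ⟪v, y i⟫ = (if f i then a else -a) := by
      intro v hv i
      have hfv : pat v = f := (Finset.mem_filter.mp hv).2
      by_cases h : f i
      · rw [if_pos h]
        have : pat v i = true := by rw [hfv]; exact h
        rw [hpat] at this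
        simpa using of_decide_eq_true this
      · rw [if_neg h]
        have hne : pat v i = false := by rw [hfv]; simpa using h
        rw [hpat] at hne
        have : ¬ (⟪v, y i⟫ = a) := of_decide_eq_false hne
        rcases hRestval v (hB₁Rest hv) i with h' | h'
        · exact absurd h' this
        · exact h'
    -- Ramsey inside B₁
    have hRam2 : ramR sStar cα ≤ B₁.card := by omega
    rcases ramsey_lemma P hPsymm sStar cα B₁ hRam2 with ⟨W, hWB₁, hWcard, hWpos⟩ | hWneg
    swap
    · exact absurd hWneg (hnoneg B₁ hB₁Ca)
    -- mixedness of f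
    have hB₁ne : B₁.Nonempty := by
      rw [← Finset.card_pos]
      have : 0 < ramR sStar cα + 1 := by omega
      omega
    obtain ⟨v₀, hv₀⟩ := hB₁ne
    have hv₀Bad : v₀ ∈ Bad := hB₁Bad hv₀
    have hv₀notgood : ¬ GoodP v₀ := (Finset.mem_filter.mp hv₀Bad).2
    have hk1 : ∃ i, f i = true := by
      by_contra hno
      push_neg at hno
      have : ∀ i, ⟪v₀, y i⟫ = -a := by
        intro i
        have := hB₁val v₀ hv₀ i
        rw [if_neg (by simpa using hno i)] at this
        exact this
      exact hv₀notgood (Or.inr this)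
    have hk2 : ∃ j, f j = false := by
      by_contra hno
      push_neg at hno
      have : ∀ i, ⟪v₀, y i⟫ = a := by
        intro i
        have h := hB₁val v₀ hv₀ i
        have htr : f i = true := Bool.ne_false_iff.mp (hno i)
        rwa [if_pos htr] at h
      exact hv₀notgood (Or.inl this)
    -- cross inner products for gadget (note order: ⟪y i, w⟫)
    have hyW : ∀ i, ∀ w ∈ W, ⟪y i, w⟫ = (if f i then a else -a) := by
      intro i w hw
      rw [real_inner_comm]
      exact hB₁val w (hWB₁ hw) i
    have hWu : ∀ w ∈ W, ‖w‖ = 1 := fun w hw => hCau w (hB₁Ca (hWB₁ hw))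
    have hWW : ∀ w ∈ W, ∀ w' ∈ W, w ≠ w' → ⟪w, w'⟫ = a := fun w hw w' hw' hne =>
      hWpos w hw w' hw' hne
    have hsineq : 8*(t:ℝ)^4*(1-a)
        < (W.card:ℝ) * (4*a*((t:ℝ)-1)*(4*a^2*((t:ℝ)-1) - (1-a)^2)) := by
      rw [hWcard, ← hγ]
      exact hsStarIneq
    exact gadget_contradiction a ha0 ha1 t ht2 ht y f W hyu hyy hWu hWW hyW hk1 hk2
      hsineq (by omega)
  -- the projection map
  set i₀ : Fin t := ⟨0, by omega⟩ with hi₀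
  set sgn : EE n → ℝ := fun v => if ⟪v, y i₀⟫ = a then 1 else -1 with hsgn
  set D : ℝ := (t:ℝ)*a^2/(1+((t:ℝ)-1)*a) with hD
  set cpr : ℝ := a/(1+((t:ℝ)-1)*a) with hcpr
  set S : EE n := ∑ i, y i with hS
  set F : EE n → EE n := fun v => (Real.sqrt (1-D))⁻¹ • ((sgn v) • v - cpr • S) with hF
  obtain ⟨hdenpos, hD1⟩ := Dfacts a (t:ℝ) ha0 ha1 htR2
  have h1D : 0 < 1 - D := by rw [hD]; linarith
  have hDnn : 0 ≤ D := by rw [hD]; positivity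
  obtain ⟨hval1, hval2⟩ := val_id a (t:ℝ) ha0 ha1 htR2
  have hsgn1 : ∀ v, sgn v = 1 ∨ sgn v = -1 := by
    intro v; rw [hsgn]; by_cases h : ⟪v, y i₀⟫ = a
    · exact Or.inl (if_pos h)
    · exact Or.inr (if_neg h)
  have hGoodkey : ∀ v ∈ Good, ∀ i, ⟪(sgn v) • v, y i⟫ = a := by
    intro v hv i
    have hvG : GoodP v := (Finset.mem_filter.mp hv).2
    rcases hvG with h | h
    · have hs1 : sgn v = 1 := by simp only [hsgn]; rw [if_pos (h i₀)]
      rw [hs1, one_smul]; exact h i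
    · have hne : ⟪v, y i₀⟫ ≠ a := by rw [h i₀]; intro hcon; nlinarith
      have hsm : sgn v = -1 := by simp only [hsgn]; rw [if_neg hne]
      rw [hsm, real_inner_smul_left, h i]; ring
  have hGoodunit : ∀ v ∈ Good, ‖(sgn v) • v‖ = 1 := by
    intro v hv
    have := hCau v (hRestCa (Finset.filter_subset _ _ hv))
    rcases hsgn1 v with h | h <;> rw [h] <;>
      simp [norm_smul, this]
  -- inner products of images
  have hFinner : ∀ v ∈ Good, ∀ w ∈ Good,
      ⟪F v, F w⟫ = (⟪(sgn v) • v, (sgn w) • w⟫ - D) / (1 - D) := by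
    intro v hv w hw
    rw [hF]
    exact proj_inner a t ha0 ha1 ht2 y hyu hyy _ _ (hGoodkey v hv) (hGoodkey w hw)
  have hFnorm : ∀ v ∈ Good, ‖F v‖ = 1 := by
    intro v hv
    have h1 : ⟪F v, F v⟫ = 1 := by
      rw [hFinner v hv v hv, inner_self_one (hGoodunit v hv), div_self (ne_of_gt h1D)]
    have h2 : ‖F v‖ * ‖F v‖ = 1 := by
      rw [← real_inner_self_eq_norm_mul_norm]; exact h1
    have h3 : (‖F v‖ - 1) * (‖F v‖ + 1) = 0 := by linear_combination h2
    rcases mul_eq_zero.mp h3 with h | h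
    · linarith
    · linarith [norm_nonneg (F v)]
  have hGoodβ : ∀ v ∈ Good, ∀ w ∈ Good, v ≠ w →
      ⟪(sgn v) • v, (sgn w) • w⟫ = a ∨ ⟪(sgn v) • v, (sgn w) • w⟫ = -a := by
    intro v hv w hw hvw
    have hvCa := hRestCa (Finset.filter_subset _ _ hv)
    have hwCa := hRestCa (Finset.filter_subset _ _ hw)
    have hvw' := hCap v hvCa w hwCa hvw
    rw [real_inner_smul_left, real_inner_smul_right]
    rcases hsgn1 v with h1 | h1 <;> rcases hsgn1 w with h2 | h2 <;>
      rw [h1, h2] <;> rcases hvw' with h | h <;> rw [h] <;>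
      (first
        | (left; ring1)
        | (right; ring1))
  have hFvals : ∀ v ∈ Good, ∀ w ∈ Good, v ≠ w →
      ⟪F v, F w⟫ = 1/((t:ℝ) + a⁻¹)
      ∨ ⟪F v, F w⟫ = -(1 / ((1 - a) / (2 * a))) * (1 - 1 / ((t:ℝ) + a⁻¹)) + 1 / ((t:ℝ) + a⁻¹) := by
    intro v hv w hw hvw
    rw [hFinner v hv w hw]
    rcases hGoodβ v hv w hw hvw with h | h <;> rw [h]
    · left; rw [← hval1, hD]
    · right; rw [← hval2, hD]
  have hvallt : ∀ v ∈ Good, ∀ w ∈ Good, v ≠ w → ⟪F v, F w⟫ < 1 := by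
    intro v hv w hw hvw
    have hTa : (0:ℝ) < (t:ℝ) + a⁻¹ := by positivity
    rcases hFvals v hv w hw hvw with h | h <;> rw [h]
    · rw [div_lt_one hTa]
      have : (0:ℝ) < a⁻¹ := by positivity
      linarith
    · have hp : 1/((t:ℝ)+a⁻¹) < 1 := by
        rw [div_lt_one hTa]
        have : (0:ℝ) < a⁻¹ := by positivity
        linarith
      have hl : 0 < (1 / ((1 - a) / (2 * a))) * (1 - 1 / ((t:ℝ) + a⁻¹)) := by
        have h2 : (0:ℝ) < (1-a)/(2*a) := div_pos (by linarith) (by linarith)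
        have h2' : 0 < 1/((1-a)/(2*a)) := by rw [one_div]; exact inv_pos.mpr h2
        have h3 : 0 < 1 - 1/((t:ℝ)+a⁻¹) := by linarith
        exact mul_pos h2' h3
      linarith
  have hFinj : Set.InjOn F ↑Good := by
    intro v hv w hw hFeq
    by_contra hvw
    have h1 : ⟪F v, F w⟫ = 1 := by
      rw [hFeq]
      exact inner_self_one (hFnorm w (by exact_mod_cast hw))
    have h2 := hvallt v (by exact_mod_cast hv) w (by exact_mod_cast hw) hvw
    linarith
  set C : Finset (EE n) := Good.image F with hC
  have hCcard : C.card = Good.card := Finset.card_image_of_injOn hFinj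
  refine ⟨C, ⟨?_, ?_⟩, ?_⟩
  · intro u hu
    rw [hC, Finset.mem_image] at hu
    obtain ⟨v, hv, rfl⟩ := hu
    exact hFnorm v hv
  · intro u₁ h₁ u₂ h₂ hne
    rw [hC, Finset.mem_image] at h₁ h₂
    obtain ⟨v, hv, rfl⟩ := h₁
    obtain ⟨w, hw, rfl⟩ := h₂
    have hvw : v ≠ w := fun h => hne (by rw [h])
    rcases hFvals v hv w hw hvw with h | h <;> rw [h]
    · exact Set.mem_insert_iff.mpr (Or.inr rfl)
    · exact Set.mem_insert_iff.mpr (Or.inl rfl)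
  · -- cardinality bookkeeping
    have hRestcard : Rest.card = Ca.card - t := by
      rw [hRest, Finset.card_sdiff_of_subset hYsub, hYcard]
    have hYle : t ≤ Ca.card := by
      rw [← hYcard]; exact Finset.card_le_card hYsub
    have hsplit : Good.card + Bad.card = Rest.card := by
      rw [hGood, hBad]
      exact Finset.card_filter_add_card_filter_not _
    rw [hCcard]
    rw [hK]
    omega
end

section
/- Let α ∈ (0,1), λ := (1−α)/(2α), and let 𝒢 be a finite family of finite simple graphs, each with spectral radius strictly greater than λ. Then there exists t ∈ ℕ such that for every n ∈ ℕ, the underlying graph of any spherical L(α,t)-code in ℝ^n does not contain any member of 𝒢 as a subgraph. -/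
open scoped Classical

lemma adjMat_nonneg {V : Type*} [Fintype V] (G : SimpleGraph V) (i j : V) :
    0 ≤ adjMat G i j := by
  unfold adjMat; split <;> norm_num

/-- From `l < specRad G` extract a nonnegative vector with Rayleigh quotient `> l`. -/
lemma exists_good_vec {m : ℕ} (G : SimpleGraph (Fin m)) (l : ℝ) (hl : 0 ≤ l)
    (hGl : l < specRad G) :
    ∃ x : Fin m → ℝ, (∀ s, 0 ≤ x s) ∧ (0 < ∑ s, x s ^ 2) ∧
      l * ∑ s, x s ^ 2 < ∑ s, ∑ s', adjMat G s s' * (x s * x s') := by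
  have h1 : ∃ μ ∈ {μ : ℝ | ∃ v : Fin m → ℝ, v ≠ 0 ∧ (adjMat G).mulVec v = μ • v}, l < μ := by
    by_contra h
    push_neg at h
    have h2 := Real.sSup_le h hl
    simp only [specRad] at hGl
    exact absurd hGl (not_lt.mpr h2)
  obtain ⟨μ, ⟨v, hv0, hveq⟩, hμ⟩ := h1
  have hS2 : 0 < ∑ s, v s ^ 2 := by
    obtain ⟨s0, hs0⟩ := Function.ne_iff.mp hv0
    exact Finset.sum_pos' (fun s _ => sq_nonneg _)
      ⟨s0, Finset.mem_univ _, pow_two_pos_of_ne_zero hs0⟩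
  refine ⟨fun s => |v s|, fun s => abs_nonneg _, ?_, ?_⟩
  · simpa only [sq_abs] using hS2
  · have key : ∑ s, ∑ s', adjMat G s s' * (v s * v s') = μ * ∑ s, v s ^ 2 := by
      have hstep : ∀ s, ∑ s', adjMat G s s' * (v s * v s') = v s * ((adjMat G).mulVec v s) := by
        intro s
        simp only [Matrix.mulVec, dotProduct, Finset.mul_sum]
        exact Finset.sum_congr rfl fun s' _ => by ring
      simp only [hstep, hveq, Pi.smul_apply, smul_eq_mul, Finset.mul_sum]
      exact Finset.sum_congr rfl fun s _ => by ring
    have mono : ∑ s, ∑ s', adjMat G s s' * (v s * v s')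
        ≤ ∑ s, ∑ s', adjMat G s s' * (|v s| * |v s'|) := by
      refine Finset.sum_le_sum fun s _ => Finset.sum_le_sum fun s' _ => ?_
      have h2 : v s * v s' ≤ |v s| * |v s'| := by
        rw [← abs_mul]; exact le_abs_self _
      exact mul_le_mul_of_nonneg_left h2 (adjMat_nonneg G s s')
    have hlt : l * ∑ s, v s ^ 2 < μ * ∑ s, v s ^ 2 :=
      mul_lt_mul_of_pos_right hμ hS2
    simp only [sq_abs]
    linarith [key ▸ mono]

theorem stmt5 (a : ℝ) (ha : a ∈ Set.Ioo (0 : ℝ) 1) (N : ℕ) (k : Fin N → ℕ)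
    (Gs : ∀ i : Fin N, SimpleGraph (Fin (k i)))
    (hG : ∀ i : Fin N, (1 - a) / (2 * a) < specRad (Gs i)) :
    ∃ t : ℕ, ∀ (n : ℕ) (C : Finset (EuclideanSpace ℝ (Fin n))),
      SphericalCode n (Lset a t) C → ∀ i : Fin N, ¬ Contains (Gs i) (codeGraph C) := by
  obtain ⟨ha0, ha1⟩ := ha
  set l : ℝ := (1 - a) / (2 * a) with hl_def
  have hl : 0 < l := div_pos (by linarith) (by linarith)
  have hex : ∀ i : Fin N, ∃ x : Fin (k i) → ℝ, (∀ s, 0 ≤ x s) ∧ (0 < ∑ s, x s ^ 2) ∧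
      l * ∑ s, x s ^ 2 < ∑ s, ∑ s', adjMat (Gs i) s s' * (x s * x s') :=
    fun i => exists_good_vec (Gs i) l hl.le (hG i)
  choose x hx0 hxS hxE using hex
  set P : Fin N → ℝ := fun i =>
    (∑ s, ∑ s', adjMat (Gs i) s s' * (x i s * x i s')) - l * ∑ s, x i s ^ 2 with hPdef
  set Q : Fin N → ℝ := fun i => l * (∑ s, x i s) ^ 2 with hQdef
  have hPpos : ∀ i, 0 < P i := fun i => sub_pos.mpr (hxE i)
  have hQ0 : ∀ i, 0 ≤ Q i := fun i => by
    simp only [hQdef]; positivity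
  set t : ℕ := (Finset.univ.sup fun i : Fin N => ⌈(Q i + P i) / P i⌉₊) + 1 with ht
  refine ⟨t, ?_⟩
  intro n C hC i hcon
  obtain ⟨f, hfinj, hfadj⟩ := hcon
  set q : ℝ := 1 / ((t : ℝ) + a⁻¹) with hq
  have hden : 0 < (t : ℝ) + a⁻¹ := by positivity
  have hq0 : 0 < q := by rw [hq]; positivity
  -- the choice of t gives the key smallness property of q
  have hqi : q * (Q i + P i) < P i := by
    have h2 : (Q i + P i) / P i ≤ ((⌈(Q i + P i) / P i⌉₊ : ℕ) : ℝ) := Nat.le_ceil _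
    have h3 : ((⌈(Q i + P i) / P i⌉₊ : ℕ) : ℝ)
        ≤ ((Finset.univ.sup fun i : Fin N => ⌈(Q i + P i) / P i⌉₊ : ℕ) : ℝ) :=
      Nat.cast_le.mpr (Finset.le_sup (f := fun i : Fin N => ⌈(Q i + P i) / P i⌉₊)
        (Finset.mem_univ i))
    have h4 : (Q i + P i) / P i < (t : ℝ) + a⁻¹ := by
      have : ((Finset.univ.sup fun i : Fin N => ⌈(Q i + P i) / P i⌉₊ : ℕ) : ℝ) + 1 ≤ (t : ℝ) := by
        rw [ht]; push_cast; linarith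
      have ha' : 0 < a⁻¹ := by positivity
      linarith
    have h5 : Q i + P i < ((t : ℝ) + a⁻¹) * P i := by
      rw [div_lt_iff₀ (hPpos i)] at h4
      linarith [h4]
    rw [hq, div_mul_eq_mul_div, one_mul, div_lt_iff₀ hden]
    linarith
  have hq1 : q < 1 := by
    have h6 : q * P i < P i := by nlinarith [mul_nonneg hq0.le (hQ0 i)]
    exact lt_of_mul_lt_mul_right (by linarith) (hPpos i).le
  -- setup of the embedded vectors
  set u : Fin (k i) → EuclideanSpace ℝ (Fin n) := fun s => (f s : EuclideanSpace ℝ (Fin n))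
    with hu_def
  have humem : ∀ s, u s ∈ C := fun s => (f s).2
  have hunorm : ∀ s, ‖u s‖ = 1 := fun s => hC.1 _ (humem s)
  set p₀ : ℝ := -(1 / l) * (1 - q) + q with hp₀
  have hp0q : p₀ ≤ q := by
    have : 0 ≤ (1 / l) * (1 - q) := mul_nonneg (by positivity) (by linarith)
    rw [hp₀]; linarith
  -- pointwise bound on inner products
  have hIP : ∀ s s' : Fin (k i), (inner ℝ (u s) (u s') : ℝ)
      ≤ (if s = s' then 1 else if (Gs i).Adj s s' then p₀ else q) := by
    intro s s'
    by_cases h : s = s'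
    · subst h
      rw [if_pos rfl, real_inner_self_eq_norm_sq, hunorm s]
      norm_num
    · rw [if_neg h]
      have hne : u s ≠ u s' := fun hc => h (hfinj (Subtype.ext hc))
      have hmem := hC.2 (u s) (humem s) (u s') (humem s') hne
      simp only [Lset, Set.mem_insert_iff, Set.mem_singleton_iff] at hmem
      rw [← hq, ← hl_def, ← hp₀] at hmem
      by_cases hadj : (Gs i).Adj s s'
      · rw [if_pos hadj]
        have hlt : (inner ℝ (u s) (u s') : ℝ) < 0 := by
          have h2 := hfadj hadj
          rw [codeGraph, SimpleGraph.fromRel_adj] at h2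
          rcases h2.2 with h3 | h3
          · exact h3
          · rwa [real_inner_comm] at h3
        rcases hmem with h4 | h4
        · rw [h4]
        · rw [h4] at hlt; linarith
      · rw [if_neg hadj]
        rcases hmem with h4 | h4
        · rw [h4]; exact hp0q
        · rw [h4]
  -- Gram matrix positivity
  have hgram : (0 : ℝ) ≤ ∑ s, ∑ s', x i s * (x i s' * (inner ℝ (u s) (u s') : ℝ)) := by
    have h0 : (0 : ℝ) ≤ (inner ℝ (∑ s, x i s • u s) (∑ s, x i s • u s) : ℝ) :=
      real_inner_self_nonneg
    calc (0 : ℝ) ≤ (inner ℝ (∑ s, x i s • u s) (∑ s, x i s • u s) : ℝ) := h0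
      _ = ∑ s, ∑ s', x i s * (x i s' * (inner ℝ (u s) (u s') : ℝ)) := by
          rw [sum_inner]
          refine Finset.sum_congr rfl fun s _ => ?_
          rw [real_inner_smul_left, inner_sum, Finset.mul_sum]
          refine Finset.sum_congr rfl fun s' _ => ?_
          rw [real_inner_smul_right]
  -- replace inner products by the if-then-else bound
  have hstep1 : (0 : ℝ) ≤ ∑ s, ∑ s', x i s * (x i s' *
      (if s = s' then 1 else if (Gs i).Adj s s' then p₀ else q)) := by
    refine le_trans hgram (Finset.sum_le_sum fun s _ => Finset.sum_le_sum fun s' _ => ?_)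
    exact mul_le_mul_of_nonneg_left
      (mul_le_mul_of_nonneg_left (hIP s s') (hx0 i s')) (hx0 i s)
  -- rewrite each term
  have hsplit : ∀ s s' : Fin (k i), x i s * (x i s' *
      (if s = s' then 1 else if (Gs i).Adj s s' then p₀ else q))
      = q * (x i s * x i s') + (if s = s' then (1 - q) * (x i s * x i s') else 0)
        - (1 - q) / l * (adjMat (Gs i) s s' * (x i s * x i s')) := by
    intro s s'
    by_cases h1 : s = s'
    · subst h1
      have hA : adjMat (Gs i) s s = 0 := by simp [adjMat]
      rw [if_pos rfl, if_pos rfl, hA]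
      ring
    · by_cases h2 : (Gs i).Adj s s'
      · have hA : adjMat (Gs i) s s' = 1 := by simp [adjMat, h2]
        have hl' : l ≠ 0 := hl.ne'
        rw [if_neg h1, if_pos h2, if_neg h1, hA, hp₀]
        field_simp
        ring
      · have hA : adjMat (Gs i) s s' = 0 := by simp [adjMat, h2]
        rw [if_neg h1, if_neg h2, if_neg h1, hA]
        ring
  -- sum identities
  have e1 : ∑ s, ∑ s', q * (x i s * x i s') = q * (∑ s, x i s) ^ 2 := by
    rw [pow_two, Finset.sum_mul_sum, Finset.mul_sum]
    exact Finset.sum_congr rfl fun s _ => by rw [Finset.mul_sum]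
  have e2 : ∑ s, ∑ s', (if s = s' then (1 - q) * (x i s * x i s') else 0)
      = (1 - q) * ∑ s, x i s ^ 2 := by
    rw [Finset.mul_sum]
    refine Finset.sum_congr rfl fun s _ => ?_
    rw [Finset.sum_ite_eq Finset.univ s (fun s' => (1 - q) * (x i s * x i s')),
      if_pos (Finset.mem_univ s)]
    ring
  have e3 : ∑ s, ∑ s', (1 - q) / l * (adjMat (Gs i) s s' * (x i s * x i s'))
      = (1 - q) / l * ∑ s, ∑ s', adjMat (Gs i) s s' * (x i s * x i s') := by
    rw [Finset.mul_sum]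
    exact Finset.sum_congr rfl fun s _ => by rw [Finset.mul_sum]
  have hfin : (0 : ℝ) ≤ q * (∑ s, x i s) ^ 2 + (1 - q) * (∑ s, x i s ^ 2)
      - (1 - q) / l * ∑ s, ∑ s', adjMat (Gs i) s s' * (x i s * x i s') := by
    have h7 := hstep1
    simp only [hsplit] at h7
    simpa only [Finset.sum_sub_distrib, Finset.sum_add_distrib, e1, e2, e3] using h7
  -- final contradiction
  set E : ℝ := ∑ s, ∑ s', adjMat (Gs i) s s' * (x i s * x i s') with hE
  set S : ℝ := ∑ s, x i s ^ 2 with hS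
  set T : ℝ := (∑ s, x i s) ^ 2 with hT
  have hEi : l * S < E := hxE i
  have hqi' : q * (l * T + (E - l * S)) < E - l * S := by
    have := hqi
    simp only [hPdef, hQdef] at this
    exact this
  have h5 : (1 - q) / l * E * l ≤ (q * T + (1 - q) * S) * l := by
    apply mul_le_mul_of_nonneg_right _ hl.le
    linarith [hfin]
  have h6 : (1 - q) / l * E * l = (1 - q) * E := by
    field_simp
  rw [h6] at h5
  nlinarith [h5, hqi']
end

section
/- Let α ∈ (0,1), t ∈ ℕ, and λ := (1−α)/(2α). For any spherical L(α,t)-code C in ℝ^n, if A is the adjacency matrix of the underlying graph of C, then rank(I − A/λ) ≤ n + 1. -/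
open scoped Classical

theorem stmt7 (a : ℝ) (ha : a ∈ Set.Ioo (0 : ℝ) 1) (t : ℕ) (n : ℕ)
    (C : Finset (EuclideanSpace ℝ (Fin n))) (hC : SphericalCode n (Lset a t) C) :
    ((1 : Matrix {v // v ∈ C} {v // v ∈ C} ℝ) -
      ((1 - a) / (2 * a))⁻¹ • adjMat (codeGraph C)).rank ≤ n + 1 := by
  obtain ⟨ha0, ha1⟩ := ha
  set lam : ℝ := (1 - a) / (2 * a) with hlam
  set q : ℝ := 1 / ((t : ℝ) + a⁻¹) with hq
  have hta : (0 : ℝ) < (t : ℝ) + a⁻¹ := by positivity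
  have h1a : (0:ℝ) < 1 - a := by linarith
  have h2a : (0:ℝ) < 2 * a := by linarith
  have hlam_pos : 0 < lam := by
    rw [hlam]; positivity
  have hq_pos : 0 < q := by rw [hq]; positivity
  have hq_lt : q < 1 := by
    rw [hq, div_lt_one hta]
    have h1 : (1 : ℝ) < a⁻¹ := (one_lt_inv₀ ha0).2 ha1
    have : (0:ℝ) ≤ (t:ℝ) := Nat.cast_nonneg t
    linarith
  set p : ℝ := -(1 / lam) * (1 - q) + q with hp
  have hainv : a * a⁻¹ = 1 := mul_inv_cancel₀ (ne_of_gt ha0)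
  have hs1 : lam < (t : ℝ) + a⁻¹ - 1 := by
    rw [hlam, div_lt_iff₀ h2a]
    have ht0 : (0:ℝ) ≤ (t:ℝ) := Nat.cast_nonneg t
    nlinarith [mul_nonneg ht0 (le_of_lt h2a)]
  have hqs : q * ((t:ℝ) + a⁻¹) = 1 := by
    rw [hq]; field_simp
  have hql : q * lam < 1 - q := by
    nlinarith [mul_pos hq_pos (sub_pos.2 (by linarith : lam + 1 < (t:ℝ) + a⁻¹))]
  have hp_neg : p < 0 := by
    have hd : q < (1 - q) / lam := by
      rw [lt_div_iff₀ hlam_pos]; linarith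
    have he : -(1 / lam) * (1 - q) = -((1 - q) / lam) := by ring
    rw [hp, he]; linarith
  set c : ℝ := (1 - q)⁻¹ with hc
  have h1q : (0:ℝ) < 1 - q := by linarith
  -- the factorization matrices
  set X : Matrix {v // v ∈ C} (Fin (n+1)) ℝ :=
    fun v => (Fin.snoc (fun j => (v : EuclideanSpace ℝ (Fin n)) j) 1 : Fin (n+1) → ℝ) with hX
  set Y : Matrix (Fin (n+1)) {v // v ∈ C} ℝ :=
    fun i w => (Fin.snoc (fun j => c * (w : EuclideanSpace ℝ (Fin n)) j) (-(q*c)) : Fin (n+1) → ℝ) i with hY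
  have hip : ∀ v w : EuclideanSpace ℝ (Fin n), (inner ℝ v w : ℝ) = ∑ j, v j * w j := by
    intro v w; simp [PiLp.inner_apply]
    exact Finset.sum_congr rfl fun j _ => mul_comm _ _
  have hmul : ∀ v w : {v // v ∈ C}, (X * Y) v w =
      c * (inner ℝ (v : EuclideanSpace ℝ (Fin n)) (w : EuclideanSpace ℝ (Fin n)) : ℝ) - q * c := by
    intro v w
    rw [Matrix.mul_apply, Fin.sum_univ_castSucc]
    simp only [hX, hY, Fin.snoc_castSucc, Fin.snoc_last, one_mul]
    rw [hip, Finset.mul_sum]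
    rw [sub_eq_add_neg]
    congr 1
    apply Finset.sum_congr rfl
    intro j _
    ring
  have hfact : ((1 : Matrix {v // v ∈ C} {v // v ∈ C} ℝ) - lam⁻¹ • adjMat (codeGraph C)) = X * Y := by
    ext v w
    rw [hmul]
    by_cases hvw : v = w
    · subst hvw
      have hnorm : ‖(v : EuclideanSpace ℝ (Fin n))‖ = 1 := hC.1 _ v.2
      have hself : (inner ℝ (v : EuclideanSpace ℝ (Fin n)) (v : EuclideanSpace ℝ (Fin n)) : ℝ) = 1 := by
        rw [real_inner_self_eq_norm_sq, hnorm]; norm_num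
      have hadj : ¬ (codeGraph C).Adj v v := SimpleGraph.irrefl _
      simp only [Matrix.sub_apply, Matrix.one_apply_eq, Matrix.smul_apply, adjMat,
        if_neg hadj, smul_zero, sub_zero, hself]
      field_simp [hc]
      rw [hc, inv_mul_cancel₀ (ne_of_gt h1q)]
    · have hvw' : (v : EuclideanSpace ℝ (Fin n)) ≠ (w : EuclideanSpace ℝ (Fin n)) := by
        exact fun h => hvw (Subtype.ext h)
      have hmem := hC.2 _ v.2 _ w.2 hvw'
      rw [Lset] at hmem
      have hadj_iff : (codeGraph C).Adj v w ↔
          ((inner ℝ (v : EuclideanSpace ℝ (Fin n)) (w : EuclideanSpace ℝ (Fin n)) : ℝ) < 0) := by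
        constructor
        · rintro ⟨-, h | h⟩
          · exact h
          · rwa [real_inner_comm]
        · intro h
          exact ⟨hvw, Or.inl h⟩
      rcases hmem with hmem | hmem
      · -- inner = p, adjacent
        have hpv : (inner ℝ (v : EuclideanSpace ℝ (Fin n)) (w : EuclideanSpace ℝ (Fin n)) : ℝ) = p := by
          rw [hmem, hp, hlam, hq]
        have hadj : (codeGraph C).Adj v w := hadj_iff.2 (by rw [hpv]; exact hp_neg)
        simp only [Matrix.sub_apply, Matrix.one_apply_ne hvw, Matrix.smul_apply, adjMat,
          if_pos hadj, smul_eq_mul, mul_one, hpv, zero_sub]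
        have hc1 : c * (1 - q) = 1 := by rw [hc]; exact inv_mul_cancel₀ (ne_of_gt h1q)
        rw [hp]
        linear_combination (1/lam) * hc1
      · -- inner = q, not adjacent
        have hqv : (inner ℝ (v : EuclideanSpace ℝ (Fin n)) (w : EuclideanSpace ℝ (Fin n)) : ℝ) = q := by
          rw [hmem, hq]
        have hadj : ¬ (codeGraph C).Adj v w := by
          rw [hadj_iff, hqv]; linarith
        simp only [Matrix.sub_apply, Matrix.one_apply_ne hvw, Matrix.smul_apply, adjMat,
          if_neg hadj, smul_zero, sub_zero, hqv]
        ring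
  rw [hfact]
  calc (X * Y).rank ≤ X.rank := Matrix.rank_mul_le_left X Y
    _ ≤ Fintype.card (Fin (n+1)) := Matrix.rank_le_card_width X
    _ = n + 1 := Fintype.card_fin _
end

section
/- Let α ∈ (0,1) and λ := (1−α)/(2α). For any k, n ∈ ℕ with k ≥ 1, n ≥ 1, and any spherical {−1/λ, 0}-code C₀ in ℝ^k, there exists a spherical {−α, α}-code in ℝ^n of cardinality ⌊(n−1)/k⌋·|C₀|. Consequently, if the spectral radius order k(λ) is finite then N_α(n) ≥ ⌊(n−1)/(k(λ)−1)⌋·k(λ), and if k(λ) = ∞ then N_α(n) ≥ n. -/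
open scoped Classical

section Helpers
open scoped Matrix

lemma euc_inner {n : ℕ} (x y : EuclideanSpace ℝ (Fin n)) :
    (inner ℝ x y : ℝ) = ∑ t, x t * y t := by
  simp [PiLp.inner_apply, RCLike.inner_apply, mul_comm]

lemma norm_one_of_inner_self {n : ℕ} (x : EuclideanSpace ℝ (Fin n))
    (h : (inner ℝ x x : ℝ) = 1) : ‖x‖ = 1 := by
  have h2 := real_inner_self_eq_norm_sq x
  nlinarith [norm_nonneg x]

lemma code_card_le (a : ℝ) (ha0 : 0 < a) (ha1 : a < 1) (n : ℕ)
    (C : Finset (EuclideanSpace ℝ (Fin n))) (hC : SphericalCode n {-a, a} C) :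
    C.card ≤ n * n := by
  classical
  set f : {x // x ∈ C} → Matrix (Fin n) (Fin n) ℝ :=
    fun v => fun s t => v.1 s * v.1 t with hf
  have hli : LinearIndependent ℝ f := by
    rw [Fintype.linearIndependent_iff]
    intro g hsum
    have h1 : ∀ s t : Fin n, (∑ v, g v * (v.1 s * v.1 t)) = 0 := by
      intro s t
      have := congrFun (congrFun hsum s) t
      rw [Matrix.sum_apply] at this; exact this
    have key : ∀ w : {x // x ∈ C}, ∑ v, g v * (inner ℝ v.1 w.1 : ℝ)^2 = 0 := by
      intro w
      calc ∑ v, g v * (inner ℝ v.1 w.1 : ℝ)^2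
          = ∑ v, ∑ s, ∑ t, (w.1 s * w.1 t) * (g v * (v.1 s * v.1 t)) := by
            refine Finset.sum_congr rfl fun v _ => ?_
            rw [euc_inner, sq, Finset.sum_mul_sum, Finset.mul_sum]
            refine Finset.sum_congr rfl fun s _ => ?_
            rw [Finset.mul_sum]
            refine Finset.sum_congr rfl fun t _ => ?_
            ring
        _ = ∑ s, ∑ t, (w.1 s * w.1 t) * (∑ v, g v * (v.1 s * v.1 t)) := by
            rw [Finset.sum_comm]
            refine Finset.sum_congr rfl fun s _ => ?_
            rw [Finset.sum_comm]
            refine Finset.sum_congr rfl fun t _ => ?_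
            rw [Finset.mul_sum]
        _ = 0 := by
            refine Finset.sum_eq_zero fun s _ => Finset.sum_eq_zero fun t _ => ?_
            rw [h1 s t, mul_zero]
    -- rewrite inner squares
    have hsq : ∀ v w : {x // x ∈ C}, (inner ℝ v.1 w.1 : ℝ)^2
        = a^2 + (if v = w then 1 - a^2 else 0) := by
      intro v w
      by_cases hvw : v = w
      · subst hvw
        have : (inner ℝ v.1 v.1 : ℝ) = 1 := by
          rw [real_inner_self_eq_norm_sq, hC.1 v.1 v.2]; norm_num
        rw [this, if_pos rfl]; ring
      · have hne : v.1 ≠ w.1 := fun h => hvw (Subtype.ext h)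
        have := hC.2 v.1 v.2 w.1 w.2 hne
        rcases this with h | h
        · simp [hvw, h, neg_sq]
        · simp at h; simp [hvw, h]
    have key2 : ∀ w : {x // x ∈ C}, g w * (1 - a^2) + a^2 * (∑ v, g v) = 0 := by
      intro w
      have := key w
      rw [Finset.sum_congr rfl fun v _ => by rw [hsq v w]] at this
      have expand : ∑ v, g v * (a^2 + (if v = w then 1 - a^2 else 0))
          = a^2 * (∑ v, g v) + g w * (1 - a^2) := by
        rw [Finset.sum_congr rfl fun v _ => (mul_add (g v) _ _)]
        rw [Finset.sum_add_distrib]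
        congr 1
        · rw [Finset.mul_sum]; exact Finset.sum_congr rfl fun v _ => mul_comm _ _
        · rw [Finset.sum_congr rfl fun v _ => (mul_ite _ _ _ _)]
          simp
      rw [expand] at this
      linarith
    intro w
    -- sum key2 over all w
    have hcard : (0 : ℝ) < Fintype.card {x // x ∈ C} := by
      have : 0 < Fintype.card {x // x ∈ C} := Fintype.card_pos_iff.mpr ⟨w⟩
      exact_mod_cast this
    have hsumall : (∑ v, g v) * ((1 - a^2) + a^2 * (Fintype.card {x // x ∈ C})) = 0 := by
      have h0 : ∑ w : {x // x ∈ C}, (g w * (1 - a^2) + a^2 * (∑ v, g v)) = 0 :=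
        Finset.sum_eq_zero fun w _ => key2 w
      have h2 : (∑ v, g v) * (1 - a^2)
          + (Fintype.card {x // x ∈ C} : ℝ) * (a^2 * (∑ v, g v)) = 0 := by
        simpa [Finset.sum_add_distrib, ← Finset.sum_mul, Finset.card_univ,
          nsmul_eq_mul] using h0
      linear_combination h2
    have hS : (∑ v, g v) = 0 := by
      have hpos : (0:ℝ) < (1 - a^2) + a^2 * (Fintype.card {x // x ∈ C}) := by
        nlinarith
      rcases mul_eq_zero.mp hsumall with h | h
      · exact h
      · linarith
    have := key2 w
    rw [hS] at this
    have : g w * (1 - a^2) = 0 := by linarith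
    rcases mul_eq_zero.mp this with h | h
    · exact h
    · nlinarith
  have hle := hli.fintype_card_le_finrank
  have hfr : Module.finrank ℝ (Matrix (Fin n) (Fin n) ℝ) = n * n := by
    simp [Module.finrank_matrix]
  rw [← Fintype.card_coe C]
  omega

lemma card_le_Nmax (a : ℝ) (ha0 : 0 < a) (ha1 : a < 1) (n : ℕ)
    (C : Finset (EuclideanSpace ℝ (Fin n))) (hC : SphericalCode n {-a, a} C) :
    C.card ≤ Nmax a n := by
  apply le_csSup
  · exact ⟨n * n, fun N ⟨D, hD, hcard⟩ => hcard ▸ code_card_le a ha0 ha1 n D hD⟩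
  · exact ⟨C, hC, rfl⟩

lemma part1 (a : ℝ) (ha0 : 0 < a) (ha1 : a < 1) (k n : ℕ) (hk : 1 ≤ k) (hn : 1 ≤ n)
    (C0 : Finset (EuclideanSpace ℝ (Fin k)))
    (hC0 : SphericalCode k {-(((1 - a) / (2 * a))⁻¹), 0} C0) :
    ∃ C : Finset (EuclideanSpace ℝ (Fin n)),
      SphericalCode n {-a, a} C ∧ C.card = ((n - 1) / k) * C0.card := by
  classical
  set m := (n - 1) / k with hm
  have hmk : m * k ≤ n - 1 := Nat.div_mul_le_self _ _
  have hlt : ∀ (j : Fin m) (i : Fin k), 1 + (k * j.val + i.val) < n := by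
    intro j i
    have h1 : k * j.val + i.val < k * m := by
      calc k * j.val + i.val < k * j.val + k := by omega
        _ = k * (j.val + 1) := by ring
        _ ≤ k * m := Nat.mul_le_mul_left _ (by omega)
    have : k * m = m * k := Nat.mul_comm _ _
    omega
  set ι : Fin m → Fin k → Fin n := fun j i => ⟨1 + (k * j.val + i.val), hlt j i⟩ with hι
  set V : Fin m → EuclideanSpace ℝ (Fin k) → EuclideanSpace ℝ (Fin n) := fun j w =>
    (WithLp.equiv 2 (Fin n → ℝ)).symm (fun t =>
      if t.val = 0 then Real.sqrt a
      else if h : (t.val - 1) / k = j.val then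
        Real.sqrt (1 - a) * w ⟨(t.val - 1) % k, Nat.mod_lt _ hk⟩
      else 0) with hV
  have hVapp : ∀ (j : Fin m) (w : EuclideanSpace ℝ (Fin k)) (t : Fin n),
      V j w t = if t.val = 0 then Real.sqrt a
      else if (t.val - 1) / k = j.val then
        Real.sqrt (1 - a) * w ⟨(t.val - 1) % k, Nat.mod_lt _ hk⟩
      else 0 := by
    intro j w t
    simp [hV, WithLp.equiv_symm_apply]
  have t0lt : 0 < n := hn
  set t0 : Fin n := ⟨0, t0lt⟩ with ht0
  -- the key inner product formula
  have hinner : ∀ (j j' : Fin m) (w w' : EuclideanSpace ℝ (Fin k)),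
      (inner ℝ (V j w) (V j' w') : ℝ)
        = a + (if j = j' then (1 - a) * (inner ℝ w w' : ℝ) else 0) := by
    intro j j' w w'
    rw [euc_inner]
    rw [← Finset.add_sum_erase _ _ (Finset.mem_univ t0)]
    have hterm0 : V j w t0 * V j' w' t0 = a := by
      rw [hVapp, hVapp]
      simp [ht0, Real.mul_self_sqrt ha0.le]
    rw [hterm0]
    congr 1
    by_cases hjj : j = j'
    · subst hjj
      simp only [if_pos rfl]
      set S : Finset (Fin n) := Finset.image (ι j) Finset.univ with hS
      have hsub : S ⊆ Finset.univ.erase t0 := by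
        intro t ht
        rcases Finset.mem_image.mp ht with ⟨i, _, rfl⟩
        refine Finset.mem_erase.mpr ⟨?_, Finset.mem_univ _⟩
        intro h
        have := congrArg Fin.val h
        simp [hι, ht0] at this
      rw [← Finset.sum_subset hsub ?vanish]
      case vanish =>
        intro t ht htS
        have htne : t.val ≠ 0 := by
          have := (Finset.mem_erase.mp ht).1
          intro h0
          exact this (Fin.ext (by simp [ht0, h0]))
        rw [hVapp, hVapp, if_neg htne, if_neg htne]
        by_cases hcond : (t.val - 1) / k = j.val
        · exfalso
          apply htS
          refine Finset.mem_image.mpr ⟨⟨(t.val - 1) % k, Nat.mod_lt _ hk⟩, Finset.mem_univ _, ?_⟩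
          apply Fin.ext
          simp only [hι]
          have h5 := Nat.div_add_mod (t.val - 1) k
          rw [hcond] at h5
          omega
        · rw [if_neg hcond, zero_mul]
      · rw [hS, Finset.sum_image (by
          intro i _ i' _ hii
          have := congrArg Fin.val hii
          simp only [hι] at this
          exact Fin.ext (by omega))]
        rw [euc_inner, Finset.mul_sum]
        refine Finset.sum_congr rfl fun i _ => ?_
        have hval : (ι j i).val = 1 + (k * j.val + i.val) := rfl
        have hne0 : (ι j i).val ≠ 0 := by omega
        have hdiv : ((ι j i).val - 1) / k = j.val := by
          rw [hval]
          simp [Nat.mul_add_div (by omega : 0 < k), Nat.div_eq_of_lt i.isLt]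
        have hmod : ((ι j i).val - 1) % k = i.val := by
          rw [hval]
          simp [Nat.mul_add_mod, Nat.mod_eq_of_lt i.isLt]
        rw [hVapp, hVapp, if_neg hne0, if_neg hne0, if_pos hdiv, if_pos hdiv]
        have : (⟨((ι j i).val - 1) % k, Nat.mod_lt _ hk⟩ : Fin k) = i := Fin.ext hmod
        rw [this]
        have hss := Real.mul_self_sqrt (by linarith : (0:ℝ) ≤ 1 - a)
        linear_combination (w i * w' i) * hss
    · simp only [if_neg hjj]
      refine Finset.sum_eq_zero fun t ht => ?_
      have htne : t.val ≠ 0 := by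
        have := (Finset.mem_erase.mp ht).1
        intro h0
        exact this (Fin.ext (by simp [ht0, h0]))
      rw [hVapp, hVapp, if_neg htne, if_neg htne]
      by_cases h1 : (t.val - 1) / k = j.val
      · have h2 : ¬ ((t.val - 1) / k = j'.val) := by
          intro h2
          exact hjj (Fin.ext (h1 ▸ h2))
        rw [if_neg h2, mul_zero]
      · rw [if_neg h1, zero_mul]
  -- inner products of code vectors
  have hself : ∀ (j : Fin m), ∀ w ∈ C0, (inner ℝ (V j w) (V j w) : ℝ) = 1 := by
    intro j w hw
    rw [hinner, if_pos rfl]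
    have : (inner ℝ w w : ℝ) = 1 := by
      rw [real_inner_self_eq_norm_sq, hC0.1 w hw]; norm_num
    rw [this]; ring
  set F : Fin m × {x // x ∈ C0} → EuclideanSpace ℝ (Fin n) := fun p => V p.1 p.2.1 with hF
  have hFinj : Function.Injective F := by
    intro ⟨j, w⟩ ⟨j', w'⟩ h
    simp only [hF] at h
    have h1 : (inner ℝ (V j w.1) (V j' w'.1) : ℝ) = 1 := by
      rw [h]; exact hself j' w'.1 w'.2
    rw [hinner] at h1
    by_cases hjj : j = j'
    · subst hjj
      rw [if_pos rfl] at h1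
      have hww : (inner ℝ w.1 w'.1 : ℝ) = 1 := by
        have hne0 : (1 : ℝ) - a ≠ 0 := by linarith
        have h1a : (1 - a) * (inner ℝ w.1 w'.1 : ℝ) = (1 - a) * 1 := by linarith
        exact mul_left_cancel₀ hne0 h1a
      by_cases hww' : w = w'
      · exact Prod.ext rfl hww'
      · exfalso
        have hne : w.1 ≠ w'.1 := fun hh => hww' (Subtype.ext hh)
        have hmem2 := hC0.2 w.1 w.2 w'.1 w'.2 hne
        simp only [Set.mem_insert_iff, Set.mem_singleton_iff] at hmem2
        rcases hmem2 with hmem | hmem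
        · rw [hww] at hmem
          have : ((1 - a) / (2 * a))⁻¹ = 2 * a / (1 - a) := by
            rw [inv_div]
          rw [this] at hmem
          have h1a : (0:ℝ) < 1 - a := by linarith
          have hpos : 0 < 2 * a / (1 - a) := by positivity
          linarith [hmem]
        · rw [hww] at hmem
          norm_num at hmem
    · rw [if_neg hjj] at h1
      exfalso; linarith
  refine ⟨Finset.image F Finset.univ, ⟨?_, ?_⟩, ?_⟩
  · intro v hv
    rcases Finset.mem_image.mp hv with ⟨⟨j, w⟩, _, rfl⟩
    exact norm_one_of_inner_self _ (hself j w.1 w.2)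
  · intro v hv u hu hvu
    rcases Finset.mem_image.mp hv with ⟨⟨j, w⟩, _, rfl⟩
    rcases Finset.mem_image.mp hu with ⟨⟨j', w'⟩, _, rfl⟩
    rw [hF]
    simp only
    rw [hinner]
    by_cases hjj : j = j'
    · subst hjj
      rw [if_pos rfl]
      have hne : w.1 ≠ w'.1 := by
        intro hh
        exact hvu (by rw [hF]; simp only; rw [hh])
      have hmem2 := hC0.2 w.1 w.2 w'.1 w'.2 hne
      simp only [Set.mem_insert_iff, Set.mem_singleton_iff] at hmem2
      rcases hmem2 with hmem | hmem
      · rw [hmem]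
        left
        have h2a : (1 : ℝ) - a ≠ 0 := by linarith
        have : ((1 - a) / (2 * a))⁻¹ = 2 * a / (1 - a) := by rw [inv_div]
        rw [this]
        field_simp
        ring
      · rw [hmem]
        right
        simp
    · rw [if_neg hjj]
      right
      simp
  · rw [Finset.card_image_of_injective _ hFinj]
    simp [Finset.card_univ, hm]

lemma spec_code (l : ℝ) (hl : 0 < l) (k : ℕ) (G : SimpleGraph (Fin (k+2)))
    (hG : specRad G = l) :
    ∃ C0 : Finset (EuclideanSpace ℝ (Fin (k+1))),
      SphericalCode (k+1) {-(l⁻¹), 0} C0 ∧ C0.card = k + 2 := by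
  classical
  set A : Matrix (Fin (k+2)) (Fin (k+2)) ℝ := adjMat G with hAdef
  have hsymmE : ∀ p q, A p q = A q p := by
    intro p q; simp [hAdef, adjMat, SimpleGraph.adj_comm]
  have hA : A.IsHermitian := by
    ext p q
    simp [Matrix.conjTranspose_apply, hsymmE p q]
  set u : Fin (k+2) → (Fin (k+2) → ℝ) := fun j => (WithLp.equiv 2 (Fin (k+2) → ℝ)) (hA.eigenvectorBasis j) with hu
  set μ : Fin (k+2) → ℝ := hA.eigenvalues with hμ
  have heig : ∀ j, A *ᵥ u j = μ j • u j := fun j => hA.mulVec_eigenvectorBasis j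
  set Umat : Matrix (Fin (k+2)) (Fin (k+2)) ℝ := ((hA.eigenvectorUnitary : Matrix.unitaryGroup (Fin (k+2)) ℝ) : Matrix (Fin (k+2)) (Fin (k+2)) ℝ)
    with hUmat
  have hUU : Umat * star Umat = 1 := Matrix.mem_unitaryGroup_iff.mp hA.eigenvectorUnitary.2
  have hUU' : star Umat * Umat = 1 := Matrix.mem_unitaryGroup_iff'.mp hA.eigenvectorUnitary.2
  have hUapp : ∀ p j, Umat p j = u j p := fun p j => rfl
  have h1 : ∀ p q, ∑ j, u j p * u j q = if p = q then 1 else 0 := by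
    intro p q
    have := congrFun (congrFun hUU p) q
    simpa [Matrix.mul_apply, Matrix.one_apply, Matrix.star_apply, hUapp] using this
  have hcol : ∀ i j, ∑ p, u i p * u j p = if i = j then 1 else 0 := by
    intro i j
    have := congrFun (congrFun hUU' i) j
    simpa [Matrix.mul_apply, Matrix.one_apply, Matrix.star_apply, hUapp] using this
  have h2 : ∀ p q, ∑ j, μ j * (u j p * u j q) = A p q := by
    intro p q
    conv_rhs => rw [hA.spectral_theorem, Unitary.conjStarAlgAut_apply]
    rw [Matrix.mul_assoc, Matrix.mul_apply]
    refine (Finset.sum_congr rfl fun j _ => ?_).symm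
    rw [Matrix.diagonal_mul]
    simp [Matrix.star_apply, hUapp, hu, WithLp.equiv_apply, hμ]
    ring
  set E : Set ℝ := {t : ℝ | ∃ v : Fin (k+2) → ℝ, v ≠ 0 ∧ A *ᵥ v = t • v} with hE
  have hspec : sSup E = l := hG
  have hsym : ∀ (x y : Fin (k+2) → ℝ),
      ∑ p, x p * (A *ᵥ y) p = ∑ p, (A *ᵥ x) p * y p := by
    intro x y
    calc ∑ p, x p * (A *ᵥ y) p = ∑ p, ∑ q, x p * (A p q * y q) := by
          refine Finset.sum_congr rfl fun p _ => ?_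
          simp [Matrix.mulVec, dotProduct, Finset.mul_sum]
      _ = ∑ q, ∑ p, x p * (A p q * y q) := Finset.sum_comm
      _ = ∑ q, (A *ᵥ x) q * y q := by
          refine Finset.sum_congr rfl fun q _ => ?_
          simp only [Matrix.mulVec, dotProduct, Finset.sum_mul]
          refine Finset.sum_congr rfl fun p _ => ?_
          rw [hsymmE p q]; ring
  have hErange : E = Set.range μ := by
    ext t
    constructor
    · rintro ⟨v, hv0, hv⟩
      have hipz : ∀ j, (t - μ j) * (∑ p, u j p * v p) = 0 := by
        intro j
        have e1 : ∑ p, u j p * (A *ᵥ v) p = t * (∑ p, u j p * v p) := by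
          rw [hv, Finset.mul_sum]
          exact Finset.sum_congr rfl fun p _ => by simp [Pi.smul_apply]; ring
        have e2 : ∑ p, u j p * (A *ᵥ v) p = μ j * (∑ p, u j p * v p) := by
          rw [hsym (u j) v]
          rw [heig j, Finset.mul_sum]
          exact Finset.sum_congr rfl fun p _ => by simp [Pi.smul_apply]; ring
        linear_combination e2 - e1
      have hexj : ∃ j, (∑ p, u j p * v p) ≠ 0 := by
        by_contra hall
        push_neg at hall
        apply hv0
        have hUv : star Umat *ᵥ v = 0 := by
          funext j
          simpa [Matrix.mulVec, dotProduct, Matrix.star_apply, hUapp] using hall j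
        have : v = Umat *ᵥ (star Umat *ᵥ v) := by
          rw [Matrix.mulVec_mulVec, hUU, Matrix.one_mulVec]
        rw [hUv, Matrix.mulVec_zero] at this
        exact this
      obtain ⟨j, hj⟩ := hexj
      have := hipz j
      rcases mul_eq_zero.mp this with h | h
      · exact ⟨j, by linarith⟩
      · exact absurd h hj
    · rintro ⟨j, rfl⟩
      refine ⟨u j, ?_, heig j⟩
      intro h0
      have := hcol j j
      rw [h0] at this
      simp at this
  have hEfin : E.Finite := hErange ▸ Set.finite_range μ
  have hEne : E.Nonempty := hErange ▸ Set.range_nonempty μ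
  have hlE : l ∈ E := hspec ▸ hEne.csSup_mem hEfin
  have hub : ∀ j, μ j ≤ l := by
    intro j
    have : μ j ∈ E := hErange ▸ Set.mem_range_self j
    calc μ j ≤ sSup E := le_csSup hEfin.bddAbove this
      _ = l := hspec
  obtain ⟨i0, hi0⟩ : ∃ i0, μ i0 = l := by
    rw [hErange] at hlE; exact hlE
  set g : Fin (k+2) → ℝ := fun i => Real.sqrt (1 - μ i / l) with hg
  have hg2 : ∀ i, g i ^ 2 = 1 - μ i / l := by
    intro i
    refine Real.sq_sqrt ?_
    have : μ i / l ≤ 1 := (div_le_one hl).mpr (hub i)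
    linarith
  set x : Fin (k+2) → EuclideanSpace ℝ (Fin (k+2)) := fun p =>
    (WithLp.equiv 2 (Fin (k+2) → ℝ)).symm (fun i => g i * u i p) with hx
  have hxapp : ∀ p i, x p i = g i * u i p := fun p i => rfl
  have hxinner : ∀ p q, (inner ℝ (x p) (x q) : ℝ) = (if p = q then 1 else 0) - A p q / l := by
    intro p q
    rw [euc_inner]
    calc ∑ i, x p i * x q i = ∑ i, ((1 - μ i / l) * (u i p * u i q)) := by
          refine Finset.sum_congr rfl fun i _ => ?_
          rw [hxapp, hxapp]
          linear_combination (u i p * u i q) * hg2 i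
      _ = (∑ i, u i p * u i q) - ∑ i, (μ i / l) * (u i p * u i q) := by
          rw [← Finset.sum_sub_distrib]
          exact Finset.sum_congr rfl fun i _ => by ring
      _ = (if p = q then 1 else 0) - A p q / l := by
          rw [h1 p q]
          congr 1
          rw [← h2 p q, Finset.sum_div]
          exact Finset.sum_congr rfl fun i _ => by ring
  have hxi0 : ∀ p, x p i0 = 0 := by
    intro p
    rw [hxapp]
    have : g i0 = 0 := by
      rw [hg]
      simp [hi0, div_self hl.ne']
    rw [this, zero_mul]
  set y : Fin (k+2) → EuclideanSpace ℝ (Fin (k+1)) := fun p =>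
    (WithLp.equiv 2 (Fin (k+1) → ℝ)).symm (fun i => x p (i0.succAbove i)) with hy
  have hyinner : ∀ p q, (inner ℝ (y p) (y q) : ℝ) = (inner ℝ (x p) (x q) : ℝ) := by
    intro p q
    rw [euc_inner, euc_inner]
    rw [Fin.sum_univ_succAbove (fun t => x p t * x q t) i0]
    rw [hxi0 p, zero_mul, zero_add]
    rfl
  have hAdiag : ∀ p, A p p = 0 := by
    intro p
    simp [hAdef, adjMat]
  have hyy : ∀ p, (inner ℝ (y p) (y p) : ℝ) = 1 := by
    intro p
    rw [hyinner, hxinner, hAdiag, if_pos rfl]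
    simp
  have hypq : ∀ p q, p ≠ q → (inner ℝ (y p) (y q) : ℝ) = -(A p q / l) := by
    intro p q hpq
    rw [hyinner, hxinner, if_neg hpq]
    ring
  have hyinj : Function.Injective y := by
    intro p q h
    by_contra hpq
    have h1' : (inner ℝ (y p) (y q) : ℝ) = 1 := by rw [h]; exact hyy q
    rw [hypq p q hpq] at h1'
    have : A p q = 0 ∨ A p q = 1 := by
      simp only [hAdef, adjMat]
      by_cases hadj : G.Adj p q <;> simp [hadj]
    rcases this with h0 | h0 <;> rw [h0] at h1'
    · simp at h1'
    · have : (0:ℝ) < 1 / l := by positivity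
      rw [div_eq_mul_inv] at h1'
      nlinarith [inv_pos.mpr hl]
  refine ⟨Finset.image y Finset.univ, ⟨?_, ?_⟩, ?_⟩
  · intro v hv
    rcases Finset.mem_image.mp hv with ⟨p, _, rfl⟩
    exact norm_one_of_inner_self _ (hyy p)
  · intro v hv w hw hvw
    rcases Finset.mem_image.mp hv with ⟨p, _, rfl⟩
    rcases Finset.mem_image.mp hw with ⟨q, _, rfl⟩
    have hpq : p ≠ q := fun h => hvw (by rw [h])
    rw [hypq p q hpq]
    by_cases hadj : G.Adj p q
    · left
      have : A p q = 1 := by simp [hAdef, adjMat, hadj]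
      rw [this, one_div]
    · right
      have : A p q = 0 := by simp [hAdef, adjMat, hadj]
      rw [this, zero_div, neg_zero]
      exact rfl
  · rw [Finset.card_image_of_injective _ hyinj, Finset.card_univ, Fintype.card_fin]

lemma all_alpha_code (a : ℝ) (ha0 : 0 < a) (ha1 : a < 1) (n : ℕ) (hn : 1 ≤ n) :
    ∃ C : Finset (EuclideanSpace ℝ (Fin n)), SphericalCode n {-a, a} C ∧ C.card = n := by
  classical
  set c : ℝ := Real.sqrt (1 - a) with hcdef
  set s : ℝ := Real.sqrt (1 - a + n * a) with hsdef
  set d : ℝ := (s - c) / n with hddef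
  have hnR : (0:ℝ) < n := by exact_mod_cast hn
  have hc2 : c^2 = 1 - a := Real.sq_sqrt (by linarith)
  have hs2 : s^2 = 1 - a + n*a := Real.sq_sqrt (by nlinarith)
  have hnd : (n:ℝ) * d = s - c := by
    rw [hddef]; field_simp
  have hkey : 2*c*d + n*d^2 = a := by
    have h3 : (n:ℝ) * (2*c*d + n*d^2) = n * a := by
      calc (n:ℝ) * (2*c*d+n*d^2) = 2*c*((n:ℝ)*d) + ((n:ℝ)*d)^2 := by ring
        _ = 2*c*(s-c) + (s-c)^2 := by rw [hnd]
        _ = n*a := by linear_combination hs2 - hc2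
    exact mul_left_cancel₀ hnR.ne' h3
  set v : Fin n → EuclideanSpace ℝ (Fin n) := fun p =>
    (WithLp.equiv 2 (Fin n → ℝ)).symm (fun t => (if t = p then c else 0) + d) with hv
  have hvapp : ∀ p t, v p t = (if t = p then c else 0) + d := fun p t => rfl
  have hinner : ∀ p q, (inner ℝ (v p) (v q) : ℝ)
      = (if p = q then c^2 else 0) + (2*c*d + n*d^2) := by
    intro p q
    rw [euc_inner]
    have expand : ∀ t : Fin n, v p t * v q t
        = (if t = p then c else 0)*(if t = q then c else 0)
          + (d*(if t = p then c else 0) + (d*(if t = q then c else 0) + d^2)) := fun t => by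
      rw [hvapp, hvapp]; ring
    rw [Finset.sum_congr rfl fun t _ => expand t]
    rw [Finset.sum_add_distrib, Finset.sum_add_distrib, Finset.sum_add_distrib]
    have s1 : ∑ t : Fin n, (if t = p then c else 0)*(if t = q then c else 0)
        = if p = q then c^2 else 0 := by
      have e : ∀ t : Fin n, (if t = p then c else 0)*(if t = q then c else 0)
          = if t = p then (if p = q then c^2 else 0) else 0 := by
        intro t
        by_cases h1 : t = p
        · subst h1
          by_cases h2 : t = q
          · subst h2; simp [sq]
          · simp [h2, Ne.symm h2]
        · simp [h1]
      rw [Finset.sum_congr rfl fun t _ => e t, Finset.sum_ite_eq' _ p]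
      simp
    have s2 : ∑ t : Fin n, d*(if t = p then c else 0) = d*c := by
      simp [mul_ite, Finset.sum_ite_eq']
    have s3 : ∑ t : Fin n, d*(if t = q then c else 0) = d*c := by
      simp [mul_ite, Finset.sum_ite_eq']
    have s4 : ∑ _t : Fin n, (d^2 : ℝ) = n * d^2 := by
      simp [Finset.sum_const, Finset.card_univ, nsmul_eq_mul]
    rw [s1, s2, s3, s4]
    ring
  have hself : ∀ p, (inner ℝ (v p) (v p) : ℝ) = 1 := by
    intro p
    rw [hinner, if_pos rfl, hkey, hc2]
    ring
  have hoff : ∀ p q, p ≠ q → (inner ℝ (v p) (v q) : ℝ) = a := by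
    intro p q hpq
    rw [hinner, if_neg hpq, hkey, zero_add]
  have hinj : Function.Injective v := by
    intro p q h
    by_contra hpq
    have h1 : (inner ℝ (v p) (v q) : ℝ) = 1 := by rw [h]; exact hself q
    rw [hoff p q hpq] at h1
    linarith
  refine ⟨Finset.image v Finset.univ, ⟨?_, ?_⟩, ?_⟩
  · intro w hw
    rcases Finset.mem_image.mp hw with ⟨p, _, rfl⟩
    exact norm_one_of_inner_self _ (hself p)
  · intro w hw z hz hwz
    rcases Finset.mem_image.mp hw with ⟨p, _, rfl⟩
    rcases Finset.mem_image.mp hz with ⟨q, _, rfl⟩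
    have hpq : p ≠ q := fun h => hwz (by rw [h])
    rw [hoff p q hpq]
    right
    exact rfl
  · rw [Finset.card_image_of_injective _ hinj, Finset.card_univ, Fintype.card_fin]

end Helpers


theorem stmt9 (a : ℝ) (ha : a ∈ Set.Ioo (0 : ℝ) 1) :
    (∀ k n : ℕ, 1 ≤ k → 1 ≤ n →
      ∀ C0 : Finset (EuclideanSpace ℝ (Fin k)),
        SphericalCode k {-(((1 - a) / (2 * a))⁻¹), 0} C0 →
        ∃ C : Finset (EuclideanSpace ℝ (Fin n)),
          SphericalCode n {-a, a} C ∧ C.card = ((n - 1) / k) * C0.card) ∧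
    (∀ k : ℕ, specOrder ((1 - a) / (2 * a)) = (k : ℕ∞) →
      ∀ n : ℕ, 1 ≤ n → ((n - 1) / (k - 1)) * k ≤ Nmax a n) ∧
    (specOrder ((1 - a) / (2 * a)) = ⊤ → ∀ n : ℕ, 1 ≤ n → n ≤ Nmax a n) := by
  obtain ⟨ha0, ha1⟩ := ha
  have hl : 0 < (1 - a) / (2 * a) := by
    apply div_pos <;> linarith
  refine ⟨fun k n hk hn C0 hC0 => part1 a ha0 ha1 k n hk hn C0 hC0, ?_, ?_⟩
  · intro k hk n hn
    have hSne : {m : ℕ | ∃ G : SimpleGraph (Fin m), specRad G = (1 - a) / (2 * a)}.Nonempty := by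
      by_contra hemp
      rw [Set.not_nonempty_iff_eq_empty] at hemp
      unfold specOrder at hk
      rw [hemp, Set.image_empty, sInf_empty] at hk
      exact absurd hk.symm (by simp)
    set S : Set ℕ := {m : ℕ | ∃ G : SimpleGraph (Fin m), specRad G = (1 - a) / (2 * a)} with hS
    have hsInfmem : sInf S ∈ S := Nat.sInf_mem hSne
    have hcoe : specOrder ((1 - a) / (2 * a)) = ((sInf S : ℕ) : ℕ∞) := by
      unfold specOrder
      apply le_antisymm
      · exact sInf_le (Set.mem_image_of_mem _ hsInfmem)
      · apply le_sInf
        rintro _ ⟨m, hm, rfl⟩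
        show ((sInf S : ℕ) : ℕ∞) ≤ (m : ℕ∞)
        exact_mod_cast Nat.sInf_le hm
    rw [hcoe] at hk
    have hkval : sInf S = k := by exact_mod_cast hk
    rw [hkval] at hsInfmem
    obtain ⟨G, hG⟩ := hsInfmem
    match k, G, hG with
    | 0, G, hG =>
      exfalso
      have hempty : {μ : ℝ | ∃ v : Fin 0 → ℝ, v ≠ 0 ∧ (adjMat G).mulVec v = μ • v} = ∅ := by
        refine Set.eq_empty_iff_forall_notMem.mpr ?_
        rintro μt ⟨v, hv0, -⟩
        exact hv0 (funext fun i => i.elim0)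
      unfold specRad at hG
      rw [hempty, Real.sSup_empty] at hG
      linarith
    | 1, G, hG =>
      exfalso
      have hA0 : adjMat G = 0 := by
        ext p q
        have hpq : p = q := Subsingleton.elim p q
        subst hpq
        simp [adjMat]
      have hset : {μ : ℝ | ∃ v : Fin 1 → ℝ, v ≠ 0 ∧ (adjMat G).mulVec v = μ • v}
          = {(0 : ℝ)} := by
        ext μt
        constructor
        · rintro ⟨v, hv0, hv⟩
          rw [hA0, Matrix.zero_mulVec] at hv
          obtain ⟨p, hp⟩ := Function.ne_iff.mp hv0
          have h0 := congrFun hv.symm p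
          simp only [Pi.smul_apply, Pi.zero_apply, smul_eq_mul] at h0 hp
          rcases mul_eq_zero.mp h0 with h | h
          · exact h
          · exact absurd h hp
        · rintro rfl
          refine ⟨fun _ => 1, ?_, ?_⟩
          · intro h
            have := congrFun h 0
            norm_num at this
          · rw [hA0, Matrix.zero_mulVec, zero_smul]
      unfold specRad at hG
      rw [hset, csSup_singleton] at hG
      linarith
    | (k' + 2), G, hG =>
      obtain ⟨C0, hC0, hcard⟩ := spec_code ((1 - a) / (2 * a)) hl k' G hG
      obtain ⟨C, hC, hCcard⟩ := part1 a ha0 ha1 (k' + 1) n (by omega) hn C0 hC0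
      have hfin := card_le_Nmax a ha0 ha1 n C hC
      rw [hCcard, hcard] at hfin
      have h21 : k' + 2 - 1 = k' + 1 := rfl
      rw [h21]
      exact hfin
  · intro _ n hn
    obtain ⟨C, hC, hcard⟩ := all_alpha_code a ha0 ha1 n hn
    have := card_le_Nmax a ha0 ha1 n C hC
    rw [hcard] at this
    exact this
end

section
/- Let α ∈ (0,1) and λ := (1−α)/(2α). If λ is not a totally real algebraic integer, then n ≤ N_α(n) ≤ n + 1 for all n ≥ 1. -/
open scoped Classical

section AuxProofs
open Polynomial Matrix

lemma eval_charpoly' {N : Type*} [Fintype N] [DecidableEq N] {R : Type*} [CommRing R]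
    (M : Matrix N N R) (t : R) : (Matrix.charpoly M).eval t = Matrix.det (t • (1 : Matrix N N R) - M) := by
  rw [Matrix.charpoly, ← Polynomial.coe_evalRingHom, RingHom.map_det]
  congr 1
  ext i j
  by_cases hij : i = j <;>
    simp [hij, Matrix.charmatrix_apply_eq, Matrix.charmatrix_apply_ne, Matrix.one_apply, hij]

lemma eig_root {N : Type*} [Fintype N] [DecidableEq N] [Nonempty N] {K : Type*} [Field K]
    (M : Matrix N N K) (t : K) (x : N → K) (hx : x ≠ 0) (hMx : M.mulVec x = t • x) :
    (Matrix.charpoly M).eval t = 0 := by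
  rw [eval_charpoly']
  rw [← Matrix.exists_mulVec_eq_zero_iff]
  refine ⟨x, hx, ?_⟩
  simp [Matrix.sub_mulVec, hMx, Matrix.smul_mulVec]

lemma totallyReal_of_symm_int {N : Type*} [Fintype N] [DecidableEq N] [Nonempty N]
    (A : Matrix N N ℤ) (hsym : ∀ i j, A i j = A j i) (l : ℝ) (x : N → ℝ) (hx : x ≠ 0)
    (hAx : (A.map (Int.cast : ℤ → ℝ)).mulVec x = l • x) : TotallyRealAlgInt l := by
  have hmapR : ((A.map (Int.cast : ℤ → ℝ)).charpoly) = (A.charpoly).map (Int.castRingHom ℝ) :=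
    Matrix.charpoly_map A (Int.castRingHom ℝ)
  have hrootR : ((A.charpoly).map (Int.castRingHom ℝ)).eval l = 0 := by
    rw [← hmapR]; exact eig_root _ l x hx hAx
  have hint : IsIntegral ℤ l := by
    refine ⟨A.charpoly, A.charpoly_monic, ?_⟩
    rwa [← Polynomial.eval_map]
  refine ⟨hint, fun z hz => ?_⟩
  -- minpoly ℚ l divides charpoly over ℚ
  have hQ : Polynomial.aeval l ((A.charpoly).map (Int.castRingHom ℚ)) = 0 := by
    have hcmp : (algebraMap ℚ ℝ).comp (Int.castRingHom ℚ) = Int.castRingHom ℝ := by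
      ext n; simp
    rw [Polynomial.aeval_def, Polynomial.eval₂_eq_eval_map, Polynomial.map_map, hcmp]
    exact hrootR
  have hdvd : minpoly ℚ l ∣ (A.charpoly).map (Int.castRingHom ℚ) := minpoly.dvd ℚ l hQ
  -- z is a root of charpoly over ℂ
  have hzc : ((A.charpoly).map (Int.castRingHom ℂ)).eval z = 0 := by
    obtain ⟨q, hq⟩ := hdvd
    have : Polynomial.aeval z ((A.charpoly).map (Int.castRingHom ℚ)) = 0 := by
      rw [hq, _root_.map_mul, hz, zero_mul]
    rwa [Polynomial.aeval_def, Polynomial.eval₂_eq_eval_map, Polynomial.map_map,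
      show (algebraMap ℚ ℂ).comp (Int.castRingHom ℚ) = Int.castRingHom ℂ by ext; simp] at this
  have hmapC : ((A.map (Int.cast : ℤ → ℂ)).charpoly) = (A.charpoly).map (Int.castRingHom ℂ) :=
    Matrix.charpoly_map A (Int.castRingHom ℂ)
  -- z is eigenvalue of A over ℂ
  have hdet : Matrix.det (z • (1 : Matrix N N ℂ) - A.map (Int.cast : ℤ → ℂ)) = 0 := by
    rw [← eval_charpoly', hmapC, hzc]
  obtain ⟨w, hw, hw0⟩ := (Matrix.exists_mulVec_eq_zero_iff).mpr hdet
  have hAw : (A.map (Int.cast : ℤ → ℂ)).mulVec w = z • w := by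
    have := hw0
    rw [Matrix.sub_mulVec, sub_eq_zero, Matrix.smul_mulVec, Matrix.one_mulVec] at this
    exact this.symm
  -- Hermitian argument
  set B : Matrix N N ℂ := A.map (Int.cast : ℤ → ℂ)
  have hS : (0:ℝ) < ∑ i, Complex.normSq (w i) := by
    have : ∃ i, w i ≠ 0 := by
      by_contra hcon
      push_neg at hcon
      exact hw (funext fun i => hcon i)
    obtain ⟨i, hi⟩ := this
    exact Finset.sum_pos' (fun j _ => Complex.normSq_nonneg _)
      ⟨i, Finset.mem_univ i, Complex.normSq_pos.mpr hi⟩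
  set S : ℂ := ∑ i, (starRingEnd ℂ) (w i) * w i with hSdef
  have hSreal : S = ((∑ i, Complex.normSq (w i) : ℝ) : ℂ) := by
    rw [hSdef]
    push_cast
    exact Finset.sum_congr rfl fun i _ => by rw [mul_comm, Complex.mul_conj]
  have hT : z * S = ∑ i, ∑ j, (starRingEnd ℂ) (w i) * (B i j * w j) := by
    rw [hSdef, Finset.mul_sum]
    refine Finset.sum_congr rfl fun i _ => ?_
    have : (B.mulVec w) i = z * w i := by rw [hAw]; rfl
    rw [← Finset.mul_sum]
    have h2 : ∑ j, B i j * w j = z * w i := by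
      rw [← this]; rfl
    rw [h2]; ring
  have hBreal : ∀ i j, (starRingEnd ℂ) (B i j) = B i j := by
    intro i j; simp [B, Matrix.map_apply]
  have hBsym : ∀ i j, B i j = B j i := by
    intro i j; simp [B, Matrix.map_apply, hsym i j]
  have hTreal : (starRingEnd ℂ) (∑ i, ∑ j, (starRingEnd ℂ) (w i) * (B i j * w j))
      = ∑ i, ∑ j, (starRingEnd ℂ) (w i) * (B i j * w j) := by
    rw [map_sum]
    have step : ∀ i, (starRingEnd ℂ) (∑ j, (starRingEnd ℂ) (w i) * (B i j * w j))
        = ∑ j, w i * (B i j * (starRingEnd ℂ) (w j)) := by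
      intro i
      rw [map_sum]
      refine Finset.sum_congr rfl fun j _ => ?_
      simp [_root_.map_mul, hBreal]
    rw [Finset.sum_congr rfl fun i _ => step i, Finset.sum_comm]
    refine Finset.sum_congr rfl fun i _ => Finset.sum_congr rfl fun j _ => ?_
    rw [hBsym j i]
    ring
  have hSne : S ≠ 0 := by
    rw [hSreal]
    exact_mod_cast ne_of_gt hS
  have : (starRingEnd ℂ) z * S = z * S := by
    have hconjS : (starRingEnd ℂ) S = S := by
      rw [hSreal]; simp
    have h1 : (starRingEnd ℂ) (z * S) = (starRingEnd ℂ) z * S := by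
      rw [_root_.map_mul, hconjS]
    rw [← h1, hT, hTreal, ← hT]
  have hzz : (starRingEnd ℂ) z = z := mul_right_cancel₀ hSne this
  exact Complex.conj_eq_iff_im.mp hzz


lemma card_le_upper (a : ℝ) (ha : a ∈ Set.Ioo (0:ℝ) 1)
    (h : ¬ TotallyRealAlgInt ((1 - a) / (2 * a)))
    {n : ℕ} {C : Finset (EuclideanSpace ℝ (Fin n))}
    (hC : SphericalCode n {-a, a} C) : C.card ≤ n + 1 := by
  obtain ⟨ha0, ha1⟩ := ha
  by_contra hcon
  push_neg at hcon
  have hcard : n + 2 ≤ C.card := hcon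
  set V := {v // v ∈ C}
  have hcardV : Fintype.card V = C.card := Fintype.card_coe C
  haveI : Nonempty V := by
    rw [← Fintype.card_pos_iff, hcardV]; omega
  -- Gram matrix
  set G : Matrix V V ℝ := fun v w =>
    (inner ℝ (v : EuclideanSpace ℝ (Fin n)) (w : EuclideanSpace ℝ (Fin n)) : ℝ) with hGdef
  set X : Matrix (Fin n) V ℝ := fun j v => (v : EuclideanSpace ℝ (Fin n)) j with hXdef
  have hG : G = Xᵀ * X := by
    ext v w
    simp only [hGdef, hXdef, Matrix.mul_apply, Matrix.transpose_apply]
    rw [PiLp.inner_apply]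
    simp [RCLike.inner_apply, conj_trivial, Matrix.mul_apply, mul_comm]
    rfl
  have hrank : G.rank ≤ n := by
    rw [hG]
    exact le_trans (Matrix.rank_mul_le_right _ _)
      (le_trans (Matrix.rank_le_card_height _) (Fintype.card_fin n).le)
  -- kernel has dimension ≥ 2
  have hrn : G.rank + Module.finrank ℝ (LinearMap.ker G.mulVecLin) = Fintype.card V := by
    have := LinearMap.finrank_range_add_finrank_ker G.mulVecLin
    rw [Matrix.rank]
    rw [this]
    simp [Module.finrank_pi]
  have hker2 : 2 ≤ Module.finrank ℝ (LinearMap.ker G.mulVecLin) := by omega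
  -- sum functional on the kernel
  set K := LinearMap.ker G.mulVecLin
  let g : (V → ℝ) →ₗ[ℝ] ℝ :=
    { toFun := fun x => ∑ i, x i
      map_add' := fun x y => by simp [Finset.sum_add_distrib]
      map_smul' := fun c x => by simp [Finset.mul_sum] }
  let f : K →ₗ[ℝ] ℝ := g.comp K.subtype
  have hkerf : 1 ≤ Module.finrank ℝ (LinearMap.ker f) := by
    have h1 := LinearMap.finrank_range_add_finrank_ker f
    have h2 : Module.finrank ℝ (LinearMap.range f) ≤ 1 := by
      have := Submodule.finrank_le (LinearMap.range f)
      simpa using this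
    omega
  have : ∃ y : K, y ∈ LinearMap.ker f ∧ y ≠ 0 := by
    have hne : LinearMap.ker f ≠ ⊥ := by
      intro hbot
      rw [hbot] at hkerf
      simp at hkerf
    obtain ⟨y, hy, hy0⟩ := Submodule.exists_mem_ne_zero_of_ne_bot hne
    exact ⟨y, hy, hy0⟩
  obtain ⟨y, hyf, hy0⟩ := this
  set x : V → ℝ := (y : V → ℝ) with hxdef
  have hx0 : x ≠ 0 := fun hc => hy0 (Subtype.ext hc)
  have hGx : G.mulVec x = 0 := y.2
  have hsum : ∑ i, x i = 0 := hyf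
  -- adjacency matrix
  set A : Matrix V V ℤ := fun v w =>
    if v ≠ w ∧ (inner ℝ (v : EuclideanSpace ℝ (Fin n)) (w : EuclideanSpace ℝ (Fin n)) : ℝ) = -a
    then 1 else 0 with hAdef
  have hAsym : ∀ i j, A i j = A j i := by
    intro i j
    have hio : (inner ℝ (i : EuclideanSpace ℝ (Fin n)) (j : EuclideanSpace ℝ (Fin n)) : ℝ)
        = (inner ℝ (j : EuclideanSpace ℝ (Fin n)) (i : EuclideanSpace ℝ (Fin n)) : ℝ) :=
      real_inner_comm _ _
    simp only [hAdef]
    by_cases hij : i = j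
    · subst hij; rfl
    · by_cases hc : (i ≠ j ∧ (inner ℝ (i : EuclideanSpace ℝ (Fin n)) (j : EuclideanSpace ℝ (Fin n)) : ℝ) = -a)
      · rw [if_pos hc, if_pos ⟨Ne.symm hc.1, by rw [← hio]; exact hc.2⟩]
      · rw [if_neg hc, if_neg ?_]
        rintro ⟨h1, h2⟩
        exact hc ⟨h1.symm, by rw [hio]; exact h2⟩
  -- key entrywise identity
  have hGentry : ∀ v w : V, G v w
      = (if v = w then (1:ℝ) else a) - 2 * a * ((A v w : ℤ) : ℝ) := by
    intro v w
    by_cases hvw : v = w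
    · subst hvw
      have hAvv : A v v = 0 := by simp [hAdef]
      have hnorm := hC.1 (v : EuclideanSpace ℝ (Fin n)) v.2
      have hGvv : G v v = 1 := by
        simp only [hGdef]
        rw [real_inner_self_eq_norm_sq, hnorm]; norm_num
      rw [hGvv, hAvv, if_pos rfl]
      norm_num
    · have hne : (v : EuclideanSpace ℝ (Fin n)) ≠ (w : EuclideanSpace ℝ (Fin n)) := by
        intro hc; exact hvw (Subtype.ext hc)
      have hmem := hC.2 _ v.2 _ w.2 hne
      simp only [hGdef, hAdef, if_neg hvw]
      rcases hmem with hm | hm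
      · rw [if_pos ⟨hvw, hm⟩, hm]
        push_cast; ring
      · rw [if_neg ?_, hm]
        · push_cast; ring
        · rintro ⟨-, hm2⟩
          rw [hm] at hm2
          linarith
  -- derive A x = λ x
  have hAx : (A.map (Int.cast : ℤ → ℝ)).mulVec x = ((1 - a) / (2 * a)) • x := by
    funext v
    have h0 : (G.mulVec x) v = 0 := by rw [hGx]; rfl
    have hexp : (G.mulVec x) v
        = (1 - a) * x v + a * (∑ i, x i) - 2 * a * (((A.map (Int.cast : ℤ → ℝ)).mulVec x) v) := by
      simp only [Matrix.mulVec, dotProduct, Matrix.map_apply]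
      rw [Finset.sum_congr rfl fun w _ => by rw [hGentry v w]]
      have hsplit : ∀ w : V, ((if v = w then (1:ℝ) else a) - 2 * a * ((A v w : ℤ):ℝ)) * x w
          = (a * x w + (if v = w then (1 - a) * x w else 0)) - 2 * a * (((A v w : ℤ):ℝ) * x w) := by
        intro w; by_cases hw : v = w <;> simp [hw] <;> ring
      rw [Finset.sum_congr rfl fun w _ => hsplit w, Finset.sum_sub_distrib,
        Finset.sum_add_distrib, Finset.sum_ite_eq, ← Finset.mul_sum, ← Finset.mul_sum]
      simp only [Finset.mem_univ, if_pos]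
      ring
    rw [hexp, hsum] at h0
    have ha2 : (2 * a) ≠ 0 := by positivity
    have hfin : (((A.map (Int.cast : ℤ → ℝ)).mulVec x) v) = ((1 - a) / (2 * a)) * x v := by
      field_simp
      linarith
    simpa [Pi.smul_apply, smul_eq_mul] using hfin
  exact h (totallyReal_of_symm_int A hAsym _ x hx0 hAx)


lemma lower_code (a : ℝ) (ha : a ∈ Set.Ioo (0:ℝ) 1) (n : ℕ) (hn : 1 ≤ n) :
    ∃ C : Finset (EuclideanSpace ℝ (Fin n)), SphericalCode n {-a, a} C ∧ C.card = n := by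
  obtain ⟨ha0, ha1⟩ := ha
  set b : ℝ := Real.sqrt (1 - a) with hbdef
  set s : ℝ := Real.sqrt (1 - a + n * a) with hsdef
  have hnr : (0:ℝ) < n := by exact_mod_cast hn
  have hb2 : b ^ 2 = 1 - a := Real.sq_sqrt (by linarith)
  have hs2 : s ^ 2 = 1 - a + n * a := Real.sq_sqrt (by nlinarith)
  have hbpos : 0 < b := Real.sqrt_pos.mpr (by linarith)
  set c : ℝ := (s - b) / n with hcdef
  have key : 2 * b * c + n * c ^ 2 = a := by
    rw [hcdef]
    field_simp
    nlinarith [hb2, hs2]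
  set u : EuclideanSpace ℝ (Fin n) := WithLp.toLp 2 (fun _ => (1:ℝ)) with hudef
  set v : Fin n → EuclideanSpace ℝ (Fin n) :=
    fun i => b • EuclideanSpace.single i (1:ℝ) + c • u with hvdef
  have huu : (inner ℝ u u : ℝ) = n := by
    rw [PiLp.inner_apply]
    simp [hudef, RCLike.inner_apply]
  have hsu : ∀ i : Fin n, (inner ℝ (EuclideanSpace.single i (1:ℝ)) u : ℝ) = 1 := by
    intro i
    rw [EuclideanSpace.inner_single_left]
    simp [hudef]
  have hus : ∀ i : Fin n, (inner ℝ u (EuclideanSpace.single i (1:ℝ)) : ℝ) = 1 := by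
    intro i
    rw [EuclideanSpace.inner_single_right]
    simp [hudef]
  have hss : ∀ i k : Fin n, (inner ℝ (EuclideanSpace.single i (1:ℝ)) (EuclideanSpace.single k (1:ℝ)) : ℝ)
      = if i = k then 1 else 0 := by
    intro i k
    rw [EuclideanSpace.inner_single_left]
    simp [EuclideanSpace.single_apply, eq_comm]
  have hinner : ∀ i k : Fin n, (inner ℝ (v i) (v k) : ℝ)
      = b ^ 2 * (if i = k then 1 else 0) + 2 * b * c + n * c ^ 2 := by
    intro i k
    rw [hvdef]
    simp only [inner_add_left, inner_add_right, real_inner_smul_left, real_inner_smul_right]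
    rw [huu, hsu, hus, hss]
    ring
  have hnorm : ∀ i : Fin n, ‖v i‖ = 1 := by
    intro i
    have h1 : (inner ℝ (v i) (v i) : ℝ) = 1 := by
      rw [hinner i i, if_pos rfl, hb2]; linear_combination key
    have h2 : ‖v i‖ ^ 2 = 1 := by rw [← real_inner_self_eq_norm_sq, h1]
    nlinarith [norm_nonneg (v i)]
  have hij : ∀ i k : Fin n, i ≠ k → (inner ℝ (v i) (v k) : ℝ) = a := by
    intro i k hik
    rw [hinner i k, if_neg hik]; linear_combination key
  have hinj : Function.Injective v := by
    intro i k hik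
    by_contra hne
    have h1 : v i i = b + c := by
      simp [hvdef, PiLp.add_apply, PiLp.smul_apply, EuclideanSpace.single_apply, hudef,
        smul_eq_mul]
    have h2 : v k i = c := by
      simp [hvdef, PiLp.add_apply, PiLp.smul_apply, EuclideanSpace.single_apply, hudef,
        smul_eq_mul, hne]
    rw [hik, h2] at h1
    have : b = 0 := by linarith
    exact absurd this (ne_of_gt hbpos)
  refine ⟨Finset.image v Finset.univ, ⟨?_, ?_⟩, ?_⟩
  · intro w hw
    obtain ⟨i, _, rfl⟩ := Finset.mem_image.mp hw
    exact hnorm i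
  · intro w hw w' hw' hne
    obtain ⟨i, _, rfl⟩ := Finset.mem_image.mp hw
    obtain ⟨k, _, rfl⟩ := Finset.mem_image.mp hw'
    have hik : i ≠ k := fun hc => hne (by rw [hc])
    right
    exact hij i k hik
  · rw [Finset.card_image_of_injective _ hinj, Finset.card_univ, Fintype.card_fin]

end AuxProofs

theorem stmt10 (a : ℝ) (ha : a ∈ Set.Ioo (0 : ℝ) 1)
    (h : ¬ TotallyRealAlgInt ((1 - a) / (2 * a))) :
    ∀ n : ℕ, 1 ≤ n → n ≤ Nmax a n ∧ Nmax a n ≤ n + 1 := by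
  intro n hn
  have hupper : ∀ k ∈ {k : ℕ | ∃ C : Finset (EuclideanSpace ℝ (Fin n)),
      SphericalCode n {-a, a} C ∧ C.card = k}, k ≤ n + 1 := by
    rintro k ⟨C, hC, rfl⟩
    exact card_le_upper a ha h hC
  have hbdd : BddAbove {k : ℕ | ∃ C : Finset (EuclideanSpace ℝ (Fin n)),
      SphericalCode n {-a, a} C ∧ C.card = k} := ⟨n + 1, hupper⟩
  obtain ⟨C, hC, hcard⟩ := lower_code a ha n hn
  have hmem : n ∈ {k : ℕ | ∃ C : Finset (EuclideanSpace ℝ (Fin n)),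
      SphericalCode n {-a, a} C ∧ C.card = k} := ⟨C, hC, hcard⟩
  exact ⟨le_csSup hbdd hmem, csSup_le ⟨n, hmem⟩ hupper⟩
end

section
/- For every m ≥ 2, the real number α_m is an algebraic integer but is not totally real: α_m is a root of a monic polynomial with integer coefficients, and the minimal polynomial of α_m over ℚ has at least one non-real complex root. -/
open scoped Classical

section AuxStmt11
open Polynomial

lemma beta_aux_lt {m : ℕ} (hm : 2 ≤ m) {x y : ℝ} (hx0 : 0 < x) (hxy : x < y)
    (hxe : x ^ (m + 1) = ∑ i ∈ Finset.range m, x ^ i)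
    (hye : y ^ (m + 1) = ∑ i ∈ Finset.range m, y ^ i) : False := by
  have hy0 : 0 < y := hx0.trans hxy
  have hle : ∀ i ∈ Finset.range m, x ^ m * y ^ i ≤ x ^ i * y ^ m := by
    intro i hi
    rw [Finset.mem_range] at hi
    have him : i + (m - i) = m := by omega
    have h1 : x ^ (m - i) ≤ y ^ (m - i) := pow_le_pow_left₀ hx0.le hxy.le _
    have hxm : x ^ m = x ^ i * x ^ (m - i) := by rw [← pow_add, him]
    have hym : y ^ m = y ^ i * y ^ (m - i) := by rw [← pow_add, him]
    calc x ^ m * y ^ i = x ^ i * y ^ i * x ^ (m - i) := by rw [hxm]; ring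
      _ ≤ x ^ i * y ^ i * y ^ (m - i) := by
            apply mul_le_mul_of_nonneg_left h1; positivity
      _ = x ^ i * y ^ m := by rw [hym]; ring
  have hstrict : x ^ m * y ^ 0 < x ^ 0 * y ^ m := by
    simpa using pow_lt_pow_left₀ hxy hx0.le (by omega : m ≠ 0)
  have hlt : ∑ i ∈ Finset.range m, x ^ m * y ^ i < ∑ i ∈ Finset.range m, x ^ i * y ^ m :=
    Finset.sum_lt_sum hle ⟨0, Finset.mem_range.mpr (by omega), hstrict⟩
  rw [← Finset.mul_sum, ← Finset.sum_mul, ← hye, ← hxe] at hlt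
  have hp : 0 < x ^ m * y ^ m := by positivity
  rw [pow_succ, pow_succ] at hlt
  nlinarith

lemma beta_spec (m : ℕ) (hm : 2 ≤ m) :
    1 < beta m ∧ beta m ^ (m + 1) = ∑ i ∈ Finset.range m, beta m ^ i := by
  set f : ℝ → ℝ := fun x => x ^ (m + 1) - ∑ i ∈ Finset.range m, x ^ i with hf
  have hcont : Continuous f := by
    apply Continuous.sub (continuous_pow _)
    exact continuous_finset_sum _ fun i _ => continuous_pow i
  have hf1 : f 1 = 1 - m := by simp [hf]
  have hf2 : 0 ≤ f 2 := by
    have hgs : ∑ i ∈ Finset.range m, (2:ℝ) ^ i = 2 ^ m - 1 := by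
      have := geom_sum_eq (by norm_num : (2:ℝ) ≠ 1) m
      norm_num at this; exact this
    have h2m : (0:ℝ) < 2 ^ m := by positivity
    simp only [hf, hgs, pow_succ]
    nlinarith
  have h0mem : (0:ℝ) ∈ Set.Icc (f 1) (f 2) := by
    constructor
    · rw [hf1]; have : (2:ℝ) ≤ m := by exact_mod_cast hm
      linarith
    · exact hf2
  obtain ⟨c, hcI, hfc⟩ := intermediate_value_Icc (by norm_num : (1:ℝ) ≤ 2) hcont.continuousOn h0mem
  have hc1 : 1 < c := by
    rcases lt_or_eq_of_le hcI.1 with h | h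
    · exact h
    · exfalso
      rw [← h] at hfc
      rw [hf1] at hfc
      have : (2:ℝ) ≤ m := by exact_mod_cast hm
      linarith
  have hceq : c ^ (m + 1) = ∑ i ∈ Finset.range m, c ^ i := by
    have := hfc; simp only [hf] at this; linarith
  have hS : {x : ℝ | 0 < x ∧ x ^ (m + 1) = ∑ i ∈ Finset.range m, x ^ i} = {c} := by
    apply Set.eq_singleton_iff_unique_mem.mpr
    refine ⟨⟨by linarith, hceq⟩, ?_⟩
    rintro x ⟨hx0, hxe⟩
    rcases lt_trichotomy x c with h | h | h
    · exact absurd (beta_aux_lt hm hx0 h hxe hceq) (by simp)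
    · exact h
    · exact absurd (beta_aux_lt hm (by linarith) h hceq hxe) (by simp)
  have : beta m = c := by rw [beta, hS, csSup_singleton]
  rw [this]; exact ⟨hc1, hceq⟩

lemma monic_aux (m : ℕ) (hm : 1 ≤ m) :
    (∑ i ∈ Finset.range m, (X : ℤ[X]) ^ (2 * (m + 1 - i)) - 1).Monic := by
  obtain ⟨n, rfl⟩ : ∃ n, m = n + 1 := ⟨m - 1, by omega⟩
  have h : ∑ i ∈ Finset.range (n + 1), (X : ℤ[X]) ^ (2 * (n + 1 + 1 - i))
      = (∑ i ∈ Finset.range n, (X : ℤ[X]) ^ (2 * (n + 1 + 1 - (i + 1)))) + X ^ (2 * (n + 1 + 1)) := by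
    simpa using Finset.sum_range_succ' (fun i => (X : ℤ[X]) ^ (2 * (n + 1 + 1 - i))) n
  rw [h]
  have h2 : (∑ i ∈ Finset.range n, (X : ℤ[X]) ^ (2 * (n + 1 + 1 - (i + 1)))) + X ^ (2 * (n + 2)) - 1
      = X ^ (2 * (n + 2)) + ((∑ i ∈ Finset.range n, (X : ℤ[X]) ^ (2 * (n + 1 - i))) - 1) := by
    have : ∀ i ∈ Finset.range n, (X : ℤ[X]) ^ (2 * (n + 1 + 1 - (i + 1))) = X ^ (2 * (n + 1 - i)) :=
      fun i _ => by congr 1; omega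
    rw [Finset.sum_congr rfl this]; ring
  rw [h2]
  apply monic_X_pow_add
  apply lt_of_le_of_lt (degree_sub_le _ _)
  rw [max_lt_iff]
  constructor
  · apply lt_of_le_of_lt (degree_sum_le _ _)
    rw [Finset.sup_lt_iff (by exact_mod_cast WithBot.bot_lt_coe (2 * (n + 2)))]
    intro i hi
    rw [Finset.mem_range] at hi
    rw [degree_X_pow]
    exact_mod_cast (by omega : 2 * (n + 1 - i) < 2 * (n + 2))
  · apply lt_of_le_of_lt degree_one_le
    exact_mod_cast (by omega : 0 < 2 * (n + 2))

lemma alpha_int (m : ℕ) (hm : 2 ≤ m) : IsIntegral ℤ (Real.sqrt (beta m)) ∧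
    IsIntegral ℤ (Real.sqrt (beta m))⁻¹ := by
  obtain ⟨hb1, hbe⟩ := beta_spec m hm
  set b := beta m with hbdef
  have hb0 : 0 < b := lt_trans one_pos hb1
  set s := Real.sqrt b with hsdef
  have hs2 : s ^ 2 = b := Real.sq_sqrt hb0.le
  have hpow : ∀ k, s ^ (2 * k) = b ^ k := fun k => by rw [pow_mul, hs2]
  have hseq : s ^ (2 * (m + 1)) = ∑ i ∈ Finset.range m, s ^ (2 * i) := by
    rw [hpow, Finset.sum_congr rfl fun i _ => hpow i]; exact hbe
  constructor
  · refine ⟨X ^ (2 * (m + 1)) - ∑ i ∈ Finset.range m, (X : ℤ[X]) ^ (2 * i), ?_, ?_⟩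
    · apply monic_X_pow_sub
      apply lt_of_le_of_lt (degree_sum_le _ _)
      rw [Finset.sup_lt_iff (by exact_mod_cast WithBot.bot_lt_coe (2 * (m + 1)))]
      intro i hi
      rw [Finset.mem_range] at hi
      rw [degree_X_pow]
      exact_mod_cast (by omega : 2 * i < 2 * (m + 1))
    · rw [← aeval_def, map_sub, map_pow, aeval_X, map_sum]
      simp only [map_pow, aeval_X]
      rw [hseq, sub_self]
  · have hteq : ∑ i ∈ Finset.range m, (s⁻¹) ^ (2 * (m + 1 - i)) = 1 := by
      have hbm : (0:ℝ) < b ^ (m + 1) := by positivity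
      have step : ∀ i ∈ Finset.range m, (s⁻¹) ^ (2 * (m + 1 - i)) = b ^ i / b ^ (m + 1) := by
        intro i hi
        rw [Finset.mem_range] at hi
        have key : b ^ i * b ^ (m + 1 - i) = b ^ (m + 1) := by
          rw [← pow_add]; congr 1; omega
        rw [inv_pow, hpow]
        field_simp
        linear_combination -key
      rw [Finset.sum_congr rfl step, ← Finset.sum_div, ← hbe, div_self hbm.ne']
    refine ⟨∑ i ∈ Finset.range m, (X : ℤ[X]) ^ (2 * (m + 1 - i)) - 1, monic_aux m (by omega), ?_⟩
    rw [← aeval_def, map_sub, map_sum, map_one]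
    simp only [map_pow, aeval_X]
    rw [hteq, sub_self]

lemma ms_one_le_prod (T : Multiset ℝ) (h : ∀ x ∈ T, (1:ℝ) ≤ x) : 1 ≤ T.prod := by
  induction T using Multiset.induction_on with
  | empty => simp
  | cons a t ih =>
    rw [Multiset.prod_cons]
    have ha := h a (Multiset.mem_cons_self a t)
    have ht := ih (fun x hx => h x (Multiset.mem_cons_of_mem hx))
    nlinarith

lemma alpha_notTR (m : ℕ) (hm : 2 ≤ m) :
    ∃ z : ℂ, Polynomial.aeval z (minpoly ℚ (alpha m)) = 0 ∧ z.im ≠ 0 := by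
  obtain ⟨hb1, hbe⟩ := beta_spec m hm
  set b := beta m with hbdef
  have hb0 : 0 < b := lt_trans one_pos hb1
  set s := Real.sqrt b with hsdef
  have hs2 : s ^ 2 = b := Real.sq_sqrt hb0.le
  have hs0 : 0 < s := Real.sqrt_pos.mpr hb0
  have hs1 : 1 < s := by nlinarith
  have hpow : ∀ k, s ^ (2 * k) = b ^ k := fun k => by rw [pow_mul, hs2]
  have hseq : s ^ (2 * (m + 1)) = ∑ i ∈ Finset.range m, s ^ (2 * i) := by
    rw [hpow, Finset.sum_congr rfl fun i _ => hpow i]; exact hbe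
  obtain ⟨hint_s, hint_t⟩ := alpha_int m hm
  have hsQ : IsIntegral ℚ s := IsIntegral.tower_top hint_s
  set P : ℚ[X] := minpoly ℚ s with hPdef
  have hPmonic : P.Monic := minpoly.monic hsQ
  have hPs : aeval s P = 0 := minpoly.aeval ℚ s
  have hZaev : aeval s ((X : ℤ[X]) ^ (2 * (m + 1)) - ∑ i ∈ Finset.range m, X ^ (2 * i)) = 0 := by
    rw [map_sub, map_pow, aeval_X, map_sum]
    simp only [map_pow, aeval_X]
    rw [hseq, sub_self]
  have hZdvd : minpoly ℤ s ∣ ((X : ℤ[X]) ^ (2 * (m + 1)) - ∑ i ∈ Finset.range m, X ^ (2 * i)) :=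
    minpoly.isIntegrallyClosed_dvd hint_s hZaev
  have hQ0 : ((X : ℤ[X]) ^ (2 * (m + 1)) - ∑ i ∈ Finset.range m, X ^ (2 * i)).coeff 0 = -1 := by
    rw [coeff_sub, coeff_X_pow, finset_sum_coeff]
    simp only [coeff_X_pow]
    rw [if_neg (by omega)]
    have hcng : ∀ i ∈ Finset.range m, (if 0 = 2 * i then (1 : ℤ) else 0)
        = if i = 0 then (1 : ℤ) else 0 := by
      intro i _
      by_cases h : i = 0 <;> simp [h]
    rw [Finset.sum_congr rfl hcng, Finset.sum_ite_eq' (Finset.range m) 0 (fun _ => (1 : ℤ)),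
      if_pos (Finset.mem_range.mpr (by omega : 0 < m))]
    norm_num
  have hPz0 : (minpoly ℤ s).coeff 0 = 1 ∨ (minpoly ℤ s).coeff 0 = -1 := by
    obtain ⟨c, hc⟩ := hZdvd
    have hdvd1 : (minpoly ℤ s).coeff 0 ∣ (-1 : ℤ) := by
      rw [← hQ0, hc, mul_coeff_zero]
      exact Dvd.intro _ rfl
    exact Int.isUnit_iff.mp (isUnit_of_dvd_unit hdvd1 (IsUnit.neg isUnit_one))
  have hPQ : P = (minpoly ℤ s).map (algebraMap ℤ ℚ) :=
    minpoly.isIntegrallyClosed_eq_field_fractions' ℚ hint_s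
  have hP0 : P.coeff 0 = 1 ∨ P.coeff 0 = -1 := by
    rw [hPQ, coeff_map]
    rcases hPz0 with h | h <;> rw [h] <;> simp
  set Pc : ℂ[X] := P.map (algebraMap ℚ ℂ) with hPcdef
  have hPcmonic : Pc.Monic := hPmonic.map _
  have hPcne : Pc ≠ 0 := hPcmonic.ne_zero
  have hsplits : Pc.Splits :=
    IsAlgClosed.splits Pc
  have habs0 : (normHom : ℂ →*₀ ℝ) (Pc.coeff 0) = 1 := by
    rw [hPcdef, coeff_map]
    rcases hP0 with h | h <;> rw [h] <;> simp
  have hprodabs : ((Pc.roots).map (normHom : ℂ →*₀ ℝ)).prod = 1 := by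
    have h := hsplits.coeff_zero_eq_prod_roots_of_monic hPcmonic
    have h2 : (normHom : ℂ →*₀ ℝ) (Pc.roots.prod) = 1 := by
      have h3 := congrArg (normHom : ℂ →*₀ ℝ) h
      rw [habs0, map_mul, map_pow] at h3
      simpa using h3.symm
    rw [← h2]
    exact (map_multiset_prod (normHom : ℂ →*₀ ℝ) _).symm
  have hsmem : (algebraMap ℝ ℂ s) ∈ Pc.roots := by
    rw [mem_roots hPcne]
    show Pc.IsRoot _
    rw [Polynomial.IsRoot.def, hPcdef, eval_map, ← aeval_def]
    have hmap : algebraMap ℝ ℂ s = ((Algebra.ofId ℝ ℂ).restrictScalars ℚ) s := rfl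
    rw [hmap, aeval_algHom_apply, hPs, map_zero]
  obtain ⟨u, humem, huabs⟩ : ∃ u ∈ Pc.roots, (normHom : ℂ →*₀ ℝ) u < 1 := by
    by_contra hcon
    push_neg at hcon
    have hT := Multiset.cons_erase hsmem
    have habs_s : (normHom : ℂ →*₀ ℝ) (algebraMap ℝ ℂ s) = s := by
      have : algebraMap ℝ ℂ s = (s : ℂ) := rfl
      rw [this, normHom_apply, Complex.norm_real, Real.norm_eq_abs, abs_of_pos hs0]
    have hone : 1 ≤ ((Pc.roots.erase (algebraMap ℝ ℂ s)).map (normHom : ℂ →*₀ ℝ)).prod := by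
      apply ms_one_le_prod
      intro x hx
      obtain ⟨y, hy, rfl⟩ := Multiset.mem_map.mp hx
      exact hcon y (Multiset.mem_of_mem_erase hy)
    have hsplit2 : ((Pc.roots).map (normHom : ℂ →*₀ ℝ)).prod
        = s * ((Pc.roots.erase (algebraMap ℝ ℂ s)).map (normHom : ℂ →*₀ ℝ)).prod := by
      conv_lhs => rw [← hT]
      rw [Multiset.map_cons, Multiset.prod_cons, habs_s]
    rw [hsplit2] at hprodabs
    nlinarith
  have huP : aeval u P = 0 := by
    have h := (mem_roots hPcne).mp humem
    rw [Polynomial.IsRoot.def, hPcdef, eval_map, ← aeval_def] at h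
    exact h
  have hune : u ≠ 0 := by
    intro h
    rw [h] at huP
    rw [← Polynomial.coeff_zero_eq_aeval_zero'] at huP
    rcases hP0 with h1 | h1 <;> rw [h1] at huP <;> simp at huP
  have huim : u.im ≠ 0 := by
    intro h0
    have hre : u = ((u.re : ℝ) : ℂ) := Complex.ext rfl (by simp [h0])
    have hQdvd : P ∣ ((X : ℚ[X]) ^ (2 * (m + 1)) - ∑ i ∈ Finset.range m, X ^ (2 * i)) := by
      apply minpoly.dvd
      rw [map_sub, map_pow, aeval_X, map_sum]
      simp only [map_pow, aeval_X]
      rw [hseq, sub_self]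
    obtain ⟨c, hc⟩ := hQdvd
    have hQu : u ^ (2 * (m + 1)) = ∑ i ∈ Finset.range m, u ^ (2 * i) := by
      have h3 : aeval u ((X : ℚ[X]) ^ (2 * (m + 1)) - ∑ i ∈ Finset.range m, X ^ (2 * i)) = 0 := by
        rw [hc, map_mul, huP, zero_mul]
      rw [map_sub, map_pow, aeval_X, map_sum] at h3
      simp only [map_pow, aeval_X] at h3
      exact sub_eq_zero.mp h3
    set r := u.re with hr
    have hrabs : |r| < 1 := by
      rw [hre, normHom_apply, Complex.norm_real, Real.norm_eq_abs] at huabs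
      exact huabs
    have hr2 : r ^ 2 < 1 := by
      have := abs_lt.mp hrabs
      nlinarith
    have heqr : r ^ (2 * (m + 1)) = ∑ i ∈ Finset.range m, r ^ (2 * i) := by
      rw [hre] at hQu
      exact_mod_cast hQu
    have hge1 : (1 : ℝ) ≤ ∑ i ∈ Finset.range m, r ^ (2 * i) := by
      have h4 := Finset.single_le_sum (f := fun i => r ^ (2 * i))
        (fun i _ => by rw [pow_mul]; positivity) (Finset.mem_range.mpr (by omega : 0 < m))
      simpa using h4
    have hlt1 : r ^ (2 * (m + 1)) < 1 := by
      rw [pow_mul]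
      exact pow_lt_one₀ (sq_nonneg r) hr2 (by omega)
    linarith
  have hPirr : Fact (Irreducible P) := ⟨minpoly.irreducible hsQ⟩
  let φ : AdjoinRoot P →ₐ[ℚ] ℝ := AdjoinRoot.liftAlgHom P (Algebra.ofId ℚ ℝ) s hPs
  let ψ : AdjoinRoot P →ₐ[ℚ] ℂ := AdjoinRoot.liftAlgHom P (Algebra.ofId ℚ ℂ) u huP
  set aK : AdjoinRoot P := AdjoinRoot.root P + (AdjoinRoot.root P)⁻¹ with haK
  have hφ : φ aK = alpha m := by
    have halpha : alpha m = s + s⁻¹ := rfl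
    rw [halpha, haK, map_add, map_inv₀, show φ (AdjoinRoot.root P) = s from AdjoinRoot.liftAlgHom_root _ _ _ _]
  have hψ : ψ aK = u + u⁻¹ := by
    rw [haK, map_add, map_inv₀, show ψ (AdjoinRoot.root P) = u from AdjoinRoot.liftAlgHom_root _ _ _ _]
  have hminpoly : minpoly ℚ (alpha m) = minpoly ℚ aK := by
    rw [← hφ]
    exact minpoly.algHom_eq φ φ.toRingHom.injective aK
  refine ⟨u + u⁻¹, ?_, ?_⟩
  · rw [hminpoly, ← hψ, aeval_algHom_apply, minpoly.aeval, map_zero]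
  · have hnormlt : Complex.normSq u < 1 := by
      rw [← Complex.sq_norm]
      nlinarith [norm_nonneg u, normHom_apply u]
    have hnorm0 : 0 < Complex.normSq u := Complex.normSq_pos.mpr hune
    rw [Complex.add_im, Complex.inv_im]
    intro hcontra
    apply huim
    have h5 : u.im * (Complex.normSq u - 1) = 0 := by
      field_simp at hcontra
      linarith
    rcases mul_eq_zero.mp h5 with h | h
    · exact h
    · linarith

end AuxStmt11

theorem stmt11 (m : ℕ) (hm : 2 ≤ m) :
    IsIntegral ℤ (alpha m) ∧
    ∃ z : ℂ, Polynomial.aeval z (minpoly ℚ (alpha m)) = 0 ∧ z.im ≠ 0 := by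
  refine ⟨?_, alpha_notTR m hm⟩
  obtain ⟨h1, h2⟩ := alpha_int m hm
  exact h1.add h2
end
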